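/- arXiv:1505.04093 — 4 statements merged into one kernel-verified Lean document; each statement's English description precedes it below -/
import Mathlib

section
/- Two points (u_t, n) ∈ T and (u_b, 0) ∈ B are mutually reachable if and only if (u_t, n) ∈ g_↓, (u_b, 0) ∈ g↑, u_t ≤ r↑(u_b, 0), and u_b ≤ r_↓(u_t, n). -/
open Set

noncomputable section

/-- The piecewise linear closed curve through the vertices `x 0, x 1, …`:
`f(i+α) = (1-α) • x i + α • x (i+1)`. -/
def fCurve {k : ℕ} (x : ℕ → EuclideanSpace ℝ (Fin k)) (t : ℝ) :
    EuclideanSpace ℝ (Fin k) :=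
  (1 - Int.fract t) • x (⌊t⌋.toNat) + Int.fract t • x (⌊t⌋.toNat + 1)

/-- The extension of the curve from `[0,m]` to `[0,2m]` by `f(u) = f(u-m)` for `u > m`. -/
def fCurveExt {k : ℕ} (m : ℕ) (x : ℕ → EuclideanSpace ℝ (Fin k)) (u : ℝ) :
    EuclideanSpace ℝ (Fin k) :=
  if u ≤ m then fCurve x u else fCurve x (u - m)

/-- The rectangle `D = [0,2m] × [0,n]`. -/
def Dfull (m n : ℕ) : Set (ℝ × ℝ) :=
  Icc (0:ℝ) (2*(m:ℝ)) ×ˢ Icc (0:ℝ) (n:ℝ)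

/-- The free space `D_ε = {(u,v) ∈ D : dist (f_X u) (f_Y v) ≤ ε}`. -/
def Dfree {k : ℕ} (m n : ℕ) (x y : ℕ → EuclideanSpace ℝ (Fin k)) (ε : ℝ) :
    Set (ℝ × ℝ) :=
  {p ∈ Dfull m n | dist (fCurveExt m x p.1) (fCurve y p.2) ≤ ε}

/-- The top side `T = [0,2m] × {n}` of `D`. -/
def Tside (m n : ℕ) : Set (ℝ × ℝ) := Icc (0:ℝ) (2*(m:ℝ)) ×ˢ {(n:ℝ)}

/-- The bottom side `B = [0,2m] × {0}` of `D`. -/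
def Bside (m : ℕ) : Set (ℝ × ℝ) := Icc (0:ℝ) (2*(m:ℝ)) ×ˢ {(0:ℝ)}

/-- A monotone (non-decreasing) path: a connected subset `γ ⊆ Dε` with
`(u-u')·(v-v') ≥ 0` for all `(u,v), (u',v') ∈ γ`. -/
def IsMonPath (Dε γ : Set (ℝ × ℝ)) : Prop :=
  γ ⊆ Dε ∧ IsConnected γ ∧
    ∀ p ∈ γ, ∀ q ∈ γ, (p.1 - q.1) * (p.2 - q.2) ≥ 0

/-- Two points are mutually reachable if some monotone path contains both. -/
def Reach (Dε : Set (ℝ × ℝ)) (p q : ℝ × ℝ) : Prop :=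
  ∃ γ : Set (ℝ × ℝ), IsMonPath Dε γ ∧ p ∈ γ ∧ q ∈ γ

/-- `g↓`: the points of `Dε` mutually reachable with at least one point of `B`. -/
def gDown (m : ℕ) (Dε : Set (ℝ × ℝ)) : Set (ℝ × ℝ) :=
  {p ∈ Dε | ∃ q ∈ Bside m, Reach Dε p q}

/-- `g↑`: the points of `Dε` mutually reachable with at least one point of `T`. -/
def gUp (m n : ℕ) (Dε : Set (ℝ × ℝ)) : Set (ℝ × ℝ) :=
  {p ∈ Dε | ∃ q ∈ Tside m n, Reach Dε p q}

/-- The pointer `r↑(p)`: the maximum `u* ∈ [0,2m]` such that `p` and `(u*, n)`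
are mutually reachable. -/
def rUp (m n : ℕ) (Dε : Set (ℝ × ℝ)) (p : ℝ × ℝ) : ℝ :=
  sSup {u : ℝ | u ∈ Icc (0:ℝ) (2*(m:ℝ)) ∧ Reach Dε p (u, (n:ℝ))}

/-- The pointer `r↓(p)`: for `p` with `p.2 > 0`, the maximum `u* ∈ [0,2m]` such
that `p` and `(u*, 0)` are mutually reachable; on the bottom side `r↓(u,0) = u`. -/
def rDown (m : ℕ) (Dε : Set (ℝ × ℝ)) (p : ℝ × ℝ) : ℝ :=
  if p.2 = 0 then p.1
  else sSup {u : ℝ | u ∈ Icc (0:ℝ) (2*(m:ℝ)) ∧ Reach Dε p (u, (0:ℝ))}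

/-- The cell `D_ij = [i-1,i] × [j-1,j]`. -/
def cellD (i j : ℕ) : Set (ℝ × ℝ) :=
  Icc ((i:ℝ)-1) (i:ℝ) ×ˢ Icc ((j:ℝ)-1) (j:ℝ)

/-- The top side `T_ij` of the cell `D_ij`. -/
def cellT (i j : ℕ) : Set (ℝ × ℝ) := Icc ((i:ℝ)-1) (i:ℝ) ×ˢ {(j:ℝ)}

/-- The bottom side `B_ij` of the cell `D_ij`. -/
def cellB (i j : ℕ) : Set (ℝ × ℝ) := Icc ((i:ℝ)-1) (i:ℝ) ×ˢ {((j:ℝ)-1)}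

/-- The right side `R_ij` of the cell `D_ij`. -/
def cellR (i j : ℕ) : Set (ℝ × ℝ) := {(i:ℝ)} ×ˢ Icc ((j:ℝ)-1) (j:ℝ)

/-- The left side `L_ij` of the cell `D_ij`. -/
def cellL (i j : ℕ) : Set (ℝ × ℝ) := {((i:ℝ)-1)} ×ˢ Icc ((j:ℝ)-1) (j:ℝ)

/-- The partial order `≼` on `D`: `(u1,v1) ≼ (u2,v2)` iff `u1 ≤ u2` and `v1 ≥ v2`. -/
def prec (p q : ℝ × ℝ) : Prop := p.1 ≤ q.1 ∧ q.2 ≤ p.2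

-- helpers
open Filter Topology

lemma monPath_pair_le {Dε γ : Set (ℝ × ℝ)} (h : IsMonPath Dε γ) {p q : ℝ × ℝ}
    (hp : p ∈ γ) (hq : q ∈ γ) (hs : p.1 + p.2 ≤ q.1 + q.2) : p.1 ≤ q.1 ∧ p.2 ≤ q.2 := by
  have hprod := h.2.2 p hp q hq
  constructor
  · by_contra hlt
    push_neg at hlt
    nlinarith
  · by_contra hlt
    push_neg at hlt
    nlinarith

lemma monPath_eq_of_sum_eq {Dε γ : Set (ℝ × ℝ)} (h : IsMonPath Dε γ) {p q : ℝ × ℝ}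
    (hp : p ∈ γ) (hq : q ∈ γ) (hs : p.1 + p.2 = q.1 + q.2) : p = q := by
  have h1 := monPath_pair_le h hp hq hs.le
  have h2 := monPath_pair_le h hq hp hs.ge
  exact Prod.ext (le_antisymm h1.1 h2.1) (le_antisymm h1.2 h2.2)

lemma monPath_exists_sum {Dε γ : Set (ℝ × ℝ)} (h : IsMonPath Dε γ) {p q : ℝ × ℝ}
    (hp : p ∈ γ) (hq : q ∈ γ) {s : ℝ} (hs : s ∈ Icc (p.1 + p.2) (q.1 + q.2)) :
    ∃ r ∈ γ, r.1 + r.2 = s := by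
  have him := h.2.1.isPreconnected.intermediate_value hp hq
    ((continuous_fst.add continuous_snd).continuousOn) hs
  obtain ⟨r, hr, hrs⟩ := him
  exact ⟨r, hr, hrs⟩

open Classical in
def ptAt (γ : Set (ℝ × ℝ)) (s : ℝ) : ℝ × ℝ :=
  if h : ∃ r ∈ γ, r.1 + r.2 = s then h.choose else (0, 0)

lemma ptAt_mem {γ : Set (ℝ × ℝ)} {s : ℝ} (h : ∃ r ∈ γ, r.1 + r.2 = s) : ptAt γ s ∈ γ := by
  rw [ptAt, dif_pos h]; exact h.choose_spec.1

lemma ptAt_sum {γ : Set (ℝ × ℝ)} {s : ℝ} (h : ∃ r ∈ γ, r.1 + r.2 = s) :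
    (ptAt γ s).1 + (ptAt γ s).2 = s := by
  rw [ptAt, dif_pos h]; exact h.choose_spec.2

lemma ptAt_eq {Dε γ : Set (ℝ × ℝ)} (hγ : IsMonPath Dε γ) {r : ℝ × ℝ} (hr : r ∈ γ) :
    ptAt γ (r.1 + r.2) = r := by
  have hex : ∃ r' ∈ γ, r'.1 + r'.2 = r.1 + r.2 := ⟨r, hr, rfl⟩
  exact monPath_eq_of_sum_eq hγ (ptAt_mem hex) hr (ptAt_sum hex)

lemma ptAt_mono {Dε γ : Set (ℝ × ℝ)} (hγ : IsMonPath Dε γ) {s s' : ℝ}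
    (hs : ∃ r ∈ γ, r.1 + r.2 = s) (hs' : ∃ r ∈ γ, r.1 + r.2 = s') (h : s ≤ s') :
    (ptAt γ s).1 ≤ (ptAt γ s').1 ∧ (ptAt γ s').1 ≤ (ptAt γ s).1 + (s' - s) := by
  have h1 := monPath_pair_le hγ (ptAt_mem hs) (ptAt_mem hs')
    (by rw [ptAt_sum hs, ptAt_sum hs']; exact h)
  have e1 := ptAt_sum hs
  have e2 := ptAt_sum hs'
  exact ⟨h1.1, by linarith [h1.2]⟩

lemma ptAt_fst_continuousOn {Dε γ : Set (ℝ × ℝ)} (hγ : IsMonPath Dε γ) {A B : ℝ}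
    (hex : ∀ s ∈ Icc A B, ∃ r ∈ γ, r.1 + r.2 = s) :
    ContinuousOn (fun s => (ptAt γ s).1) (Icc A B) := by
  apply LipschitzOnWith.continuousOn (K := 1)
  rw [lipschitzOnWith_iff_dist_le_mul]
  intro s hs s' hs'
  rw [Real.dist_eq, Real.dist_eq, NNReal.coe_one, one_mul]
  rcases le_total s s' with h | h
  · have h2 := ptAt_mono hγ (hex s hs) (hex s' hs') h
    rw [abs_of_nonpos (by linarith), abs_of_nonpos (by linarith)]
    linarith
  · have h2 := ptAt_mono hγ (hex s' hs') (hex s hs) h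
    rw [abs_of_nonneg (by linarith), abs_of_nonneg (by linarith)]
    linarith

lemma mem_Dfull_iff {m n : ℕ} {r : ℝ × ℝ} :
    r ∈ Dfull m n ↔ (0 ≤ r.1 ∧ r.1 ≤ 2*(m:ℝ)) ∧ (0 ≤ r.2 ∧ r.2 ≤ (n:ℝ)) := by
  constructor
  · intro h; exact ⟨⟨h.1.1, h.1.2⟩, ⟨h.2.1, h.2.2⟩⟩
  · intro h; exact ⟨⟨h.1.1, h.1.2⟩, ⟨h.2.1, h.2.2⟩⟩

lemma cross {m n : ℕ} {Dε : Set (ℝ × ℝ)} (hsub : Dε ⊆ Dfull m n)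
    {γ1 γ2 : Set (ℝ × ℝ)} (h1 : IsMonPath Dε γ1) (h2 : IsMonPath Dε γ2)
    {ub bb ut tt : ℝ}
    (ha1 : (ub, (0:ℝ)) ∈ γ1) (hc1 : (tt, (n:ℝ)) ∈ γ1)
    (ha2 : (bb, (0:ℝ)) ∈ γ2) (hc2 : (ut, (n:ℝ)) ∈ γ2)
    (hub : ub ≤ bb) (hut : ut ≤ tt) (hn : (0:ℝ) < n) :
    Reach Dε (ut, (n:ℝ)) (ub, (0:ℝ)) := by
  have hbut : bb ≤ ut := by
    have := h2.2.2 _ ha2 _ hc2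
    simp only at this
    nlinarith
  have hex1 : ∀ s ∈ Icc ub (tt + n), ∃ r ∈ γ1, r.1 + r.2 = s := by
    intro s hs
    exact monPath_exists_sum h1 ha1 hc1 (by simpa using hs)
  have hex2 : ∀ s ∈ Icc bb (ut + n), ∃ r ∈ γ2, r.1 + r.2 = s := by
    intro s hs
    exact monPath_exists_sum h2 ha2 hc2 (by simpa using hs)
  have hsub12 : Icc bb (ut + (n:ℝ)) ⊆ Icc ub (tt + n) :=
    Icc_subset_Icc hub (by linarith)
  set u1 : ℝ → ℝ := fun s => (ptAt γ1 s).1 with hu1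
  set u2 : ℝ → ℝ := fun s => (ptAt γ2 s).1 with hu2
  have hgcont : ContinuousOn (fun s => u1 s - u2 s) (Icc bb (ut + n)) :=
    ((ptAt_fst_continuousOn h1 hex1).mono hsub12).sub (ptAt_fst_continuousOn h2 hex2)
  have hbble : bb ≤ ut + n := by linarith
  have he2bb : ptAt γ2 bb = (bb, 0) := by
    have := ptAt_eq h2 ha2; simpa using this
  have he2top : ptAt γ2 (ut + n) = (ut, (n:ℝ)) := by
    have h := ptAt_eq h2 hc2
    simpa using h
  have he1ub : ptAt γ1 ub = (ub, 0) := by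
    have := ptAt_eq h1 ha1; simpa using this
  have hgbb : u1 bb - u2 bb ≤ 0 := by
    have hm : bb ∈ Icc ub (tt + n) := hsub12 ⟨le_rfl, hbble⟩
    have hsum := ptAt_sum (hex1 bb hm)
    have hmem := mem_Dfull_iff.1 (hsub (h1.1 (ptAt_mem (hex1 bb hm))))
    have : u2 bb = bb := by rw [hu2]; simp [he2bb]
    rw [this]
    simp only [hu1]
    linarith [hmem.2.1]
  have hgtop : 0 ≤ u1 (ut + n) - u2 (ut + n) := by
    have hm : (ut + (n:ℝ)) ∈ Icc ub (tt + n) := hsub12 ⟨hbble, le_rfl⟩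
    have hsum := ptAt_sum (hex1 _ hm)
    have hmem := mem_Dfull_iff.1 (hsub (h1.1 (ptAt_mem (hex1 _ hm))))
    have : u2 (ut + n) = ut := by rw [hu2]; simp [he2top]
    rw [this]
    simp only [hu1]
    linarith [hmem.2.2]
  obtain ⟨ss, hss, hgss⟩ := intermediate_value_Icc hbble hgcont ⟨hgbb, hgtop⟩
  have hss1 : ss ∈ Icc ub (tt + n) := hsub12 hss
  have hpp : ptAt γ1 ss = ptAt γ2 ss := by
    have e1 := ptAt_sum (hex1 ss hss1)
    have e2 := ptAt_sum (hex2 ss hss)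
    have hfst : (ptAt γ1 ss).1 = (ptAt γ2 ss).1 := by
      have : u1 ss - u2 ss = 0 := hgss
      simpa [hu1, hu2, sub_eq_zero] using this
    exact Prod.ext hfst (by linarith)
  set F1 : ℝ → ℝ × ℝ := fun s => (u1 s, s - u1 s) with hF1
  set F2 : ℝ → ℝ × ℝ := fun s => (u2 s, s - u2 s) with hF2
  have hF1eq : ∀ s ∈ Icc ub (tt + n), F1 s = ptAt γ1 s := by
    intro s hs
    have hsum := ptAt_sum (hex1 s hs)
    have h2' : (F1 s).2 = (ptAt γ1 s).2 := by simp only [hF1, hu1]; linarith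
    exact Prod.ext rfl h2'
  have hF2eq : ∀ s ∈ Icc bb (ut + n), F2 s = ptAt γ2 s := by
    intro s hs
    have hsum := ptAt_sum (hex2 s hs)
    have h2' : (F2 s).2 = (ptAt γ2 s).2 := by simp only [hF2, hu2]; linarith
    exact Prod.ext rfl h2'
  have hsubI1 : Icc ub ss ⊆ Icc ub (tt + n) := Icc_subset_Icc le_rfl hss1.2
  have hsubI2 : Icc ss (ut + n) ⊆ Icc bb (ut + n) := Icc_subset_Icc hss.1 le_rfl
  have hmemγ1 : ∀ s ∈ Icc ub ss, F1 s ∈ γ1 := by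
    intro s hs; rw [hF1eq s (hsubI1 hs)]; exact ptAt_mem (hex1 s (hsubI1 hs))
  have hmemγ2 : ∀ s ∈ Icc ss (ut + n), F2 s ∈ γ2 := by
    intro s hs; rw [hF2eq s (hsubI2 hs)]; exact ptAt_mem (hex2 s (hsubI2 hs))
  have hubss : ub ≤ ss := le_trans hub hss.1
  have hcross : F1 ss = F2 ss := by
    rw [hF1eq ss hss1, hF2eq ss hss, hpp]
  -- the combined path
  refine ⟨F1 '' Icc ub ss ∪ F2 '' Icc ss (ut + n), ⟨?_, ?_, ?_⟩, ?_, ?_⟩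
  · rintro r (⟨s, hs, rfl⟩ | ⟨s, hs, rfl⟩)
    · exact h1.1 (hmemγ1 s hs)
    · exact h2.1 (hmemγ2 s hs)
  · apply IsConnected.union
    · exact ⟨F1 ss, ⟨ss, ⟨hubss, le_rfl⟩, rfl⟩, ⟨ss, ⟨le_rfl, hss.2⟩, hcross.symm⟩⟩
    · apply (isConnected_Icc hubss).image
      refine ContinuousOn.prodMk ?_ (continuousOn_id.sub ?_) <;>
        exact (ptAt_fst_continuousOn h1 hex1).mono hsubI1
    · apply (isConnected_Icc hss.2).image
      refine ContinuousOn.prodMk ?_ (continuousOn_id.sub ?_) <;>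
        exact (ptAt_fst_continuousOn h2 hex2).mono hsubI2
  · rintro p (⟨s, hs, rfl⟩ | ⟨s, hs, rfl⟩) q (⟨s', hs', rfl⟩ | ⟨s', hs', rfl⟩)
    · exact h1.2.2 _ (hmemγ1 s hs) _ (hmemγ1 s' hs')
    · -- p on γ1-part, q on γ2-part : p ≤ cross ≤ q coordinatewise
      have hp := ptAt_mono h1 (hex1 s (hsubI1 hs)) (hex1 ss hss1) hs.2
      have hq := ptAt_mono h2 (hex2 ss hss) (hex2 s' (hsubI2 hs')) hs'.1
      have hppq : u1 ss = u2 ss := by simp only [hu1, hu2, hpp]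
      have h1s : u1 s ≤ u1 ss := hp.1
      have h2s : u2 ss ≤ u2 s' := hq.1
      have hv1 : s - u1 s ≤ ss - u1 ss := by
        have e1 := ptAt_sum (hex1 s (hsubI1 hs))
        have e2 := ptAt_sum (hex1 ss hss1)
        have := (monPath_pair_le h1 (ptAt_mem (hex1 s (hsubI1 hs)))
          (ptAt_mem (hex1 ss hss1)) (by rw [e1, e2]; exact hs.2)).2
        simp only [hu1]; linarith
      have hv2 : ss - u2 ss ≤ s' - u2 s' := by
        have e1 := ptAt_sum (hex2 ss hss)
        have e2 := ptAt_sum (hex2 s' (hsubI2 hs'))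
        have := (monPath_pair_le h2 (ptAt_mem (hex2 ss hss))
          (ptAt_mem (hex2 s' (hsubI2 hs'))) (by rw [e1, e2]; exact hs'.1)).2
        simp only [hu2]; linarith
      simp only [hF1, hF2]
      nlinarith
    · have hp := ptAt_mono h2 (hex2 ss hss) (hex2 s (hsubI2 hs)) hs.1
      have hq := ptAt_mono h1 (hex1 s' (hsubI1 hs')) (hex1 ss hss1) hs'.2
      have hppq : u1 ss = u2 ss := by simp only [hu1, hu2, hpp]
      have hv1 : ss - u2 ss ≤ s - u2 s := by
        have e1 := ptAt_sum (hex2 ss hss)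
        have e2 := ptAt_sum (hex2 s (hsubI2 hs))
        have := (monPath_pair_le h2 (ptAt_mem (hex2 ss hss))
          (ptAt_mem (hex2 s (hsubI2 hs))) (by rw [e1, e2]; exact hs.1)).2
        simp only [hu2]; linarith
      have hv2 : s' - u1 s' ≤ ss - u1 ss := by
        have e1 := ptAt_sum (hex1 s' (hsubI1 hs'))
        have e2 := ptAt_sum (hex1 ss hss1)
        have := (monPath_pair_le h1 (ptAt_mem (hex1 s' (hsubI1 hs')))
          (ptAt_mem (hex1 ss hss1)) (by rw [e1, e2]; exact hs'.2)).2
        simp only [hu1]; linarith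
      simp only [hF1, hF2]
      nlinarith [hp.1, hq.1]
    · exact h2.2.2 _ (hmemγ2 s hs) _ (hmemγ2 s' hs')
  · -- (ut, n) ∈ combined
    right
    refine ⟨ut + n, ⟨hss.2, le_rfl⟩, ?_⟩
    rw [hF2eq _ ⟨hbble, le_rfl⟩, he2top]
  · left
    refine ⟨ub, ⟨le_rfl, hubss⟩, ?_⟩
    rw [hF1eq ub (hsubI1 ⟨le_rfl, hubss⟩)]
    exact he1ub

lemma reach_bot_limit {m n : ℕ} {Dε : Set (ℝ × ℝ)} (hclosed : IsClosed Dε)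
    (hsub : Dε ⊆ Dfull m n) {p : ℝ × ℝ} (hp2 : 0 < p.2)
    {b : ℕ → ℝ} {bb : ℝ} (hr : ∀ i, Reach Dε p (b i, (0:ℝ)))
    (hle : ∀ i, b i ≤ bb) (hlim : Filter.Tendsto b Filter.atTop (nhds bb)) :
    Reach Dε p (bb, (0:ℝ)) := by
  choose γ hγ hpγ hbγ using hr
  set sp := p.1 + p.2 with hsp
  have hb_le : ∀ i, b i ≤ p.1 := by
    intro i
    have hprod := (hγ i).2.2 _ (hpγ i) _ (hbγ i)
    simp only at hprod
    nlinarith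
  have hbb_le : bb ≤ p.1 := le_of_tendsto hlim (Filter.Eventually.of_forall hb_le)
  have hbbsp : bb ≤ sp := by rw [hsp]; linarith
  have hex : ∀ i, ∀ s ∈ Icc bb sp, ∃ r ∈ γ i, r.1 + r.2 = s := by
    intro i s hs
    refine monPath_exists_sum (hγ i) (hbγ i) (hpγ i) ?_
    simp only
    constructor
    · have := hle i; have := hs.1; linarith
    · exact hs.2
  set u : ℕ → ℝ → ℝ := fun i s => (ptAt (γ i) s).1 with hu
  have hbd : ∀ s ∈ Icc bb sp, ∀ i, 0 ≤ u i s ∧ u i s ≤ 2*(m:ℝ) := by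
    intro s hs i
    have := (mem_Dfull_iff.1 (hsub ((hγ i).1 (ptAt_mem (hex i s hs))))).1
    exact this
  have hBdd : ∀ s ∈ Icc bb sp, Filter.IsBoundedUnder (· ≤ ·) Filter.atTop (fun i => u i s) :=
    fun s hs => Filter.isBoundedUnder_of ⟨2*(m:ℝ), fun i => (hbd s hs i).2⟩
  have hCob : ∀ s ∈ Icc bb sp, Filter.IsCoboundedUnder (· ≤ ·) Filter.atTop (fun i => u i s) :=
    fun s hs => Filter.IsBoundedUnder.isCoboundedUnder_le
      (Filter.isBoundedUnder_of ⟨0, fun i => (hbd s hs i).1⟩)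
  set U : ℝ → ℝ := fun s => Filter.limsup (fun i => u i s) Filter.atTop with hU
  have hmonolip : ∀ s ∈ Icc bb sp, ∀ s' ∈ Icc bb sp, s ≤ s' →
      U s ≤ U s' ∧ U s' ≤ U s + (s' - s) := by
    intro s hs s' hs' hss
    have h1 : ∀ i, u i s ≤ u i s' := fun i =>
      (ptAt_mono (hγ i) (hex i s hs) (hex i s' hs') hss).1
    have h2 : ∀ i, u i s' ≤ u i s + (s' - s) := fun i =>
      (ptAt_mono (hγ i) (hex i s hs) (hex i s' hs') hss).2
    constructor
    · exact Filter.limsup_le_limsup (Filter.Eventually.of_forall h1) (hCob s hs) (hBdd s' hs')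
    · calc U s' ≤ Filter.limsup (fun i => u i s + (s' - s)) Filter.atTop :=
            Filter.limsup_le_limsup (Filter.Eventually.of_forall h2) (hCob s' hs')
              (Filter.isBoundedUnder_of ⟨2*(m:ℝ) + (s' - s), fun i => by
                have := (hbd s hs i).2; linarith⟩)
        _ = U s + (s' - s) := limsup_add_const Filter.atTop (fun i => u i s) (s' - s)
              (hBdd s hs) (hCob s hs)
  have hmemD : ∀ s ∈ Icc bb sp, (U s, s - U s) ∈ Dε := by
    intro s hs
    rw [← hclosed.closure_eq]
    rw [Metric.mem_closure_iff]
    intro δ hδ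
    have hfr : ∃ᶠ i in Filter.atTop, U s - δ/2 < u i s :=
      Filter.frequently_lt_of_lt_limsup (hCob s hs) (by rw [hU]; simp only; linarith)
    have hev : ∀ᶠ i in Filter.atTop, u i s < U s + δ/2 :=
      Filter.eventually_lt_of_limsup_lt (by rw [hU]; simp only; linarith) (hBdd s hs)
    obtain ⟨i, hi1, hi2⟩ := (hfr.and_eventually hev).exists
    refine ⟨ptAt (γ i) s, (hγ i).1 (ptAt_mem (hex i s hs)), ?_⟩
    have hsum := ptAt_sum (hex i s hs)
    rw [Prod.dist_eq, max_lt_iff]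
    constructor
    · rw [Real.dist_eq, abs_lt]
      constructor <;> simp only [hu] at hi1 hi2 ⊢ <;> linarith
    · rw [Real.dist_eq, abs_lt]
      have h2' : (ptAt (γ i) s).2 = s - u i s := by simp only [hu]; linarith
      rw [h2']
      constructor <;> simp only [hu] at hi1 hi2 ⊢ <;> linarith
  have hUbb : U bb = bb := by
    have hbbI : bb ∈ Icc bb sp := ⟨le_rfl, hbbsp⟩
    have hlow : ∀ i, b i ≤ u i bb := by
      intro i
      have hpair := monPath_pair_le (hγ i) (hbγ i) (ptAt_mem (hex i bb hbbI))
        (by rw [ptAt_sum (hex i bb hbbI)]; simp only; linarith [hle i])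
      simpa [hu] using hpair.1
    have hhigh : ∀ i, u i bb ≤ bb := by
      intro i
      have hsum := ptAt_sum (hex i bb hbbI)
      have h0 := (mem_Dfull_iff.1 (hsub ((hγ i).1 (ptAt_mem (hex i bb hbbI))))).2.1
      simp only [hu]; linarith
    have htendsto : Filter.Tendsto (fun i => u i bb) Filter.atTop (nhds bb) :=
      tendsto_of_tendsto_of_tendsto_of_le_of_le hlim tendsto_const_nhds hlow hhigh
    exact htendsto.limsup_eq
  have hUsp : U sp = p.1 := by
    have : ∀ i, u i sp = p.1 := by
      intro i
      have := ptAt_eq (hγ i) (hpγ i)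
      simp only [hu, hsp, this]
    simp only [hU, this, Filter.limsup_const]
  have hUcont : ContinuousOn U (Icc bb sp) := by
    apply LipschitzOnWith.continuousOn (K := 1)
    rw [lipschitzOnWith_iff_dist_le_mul]
    intro s hs s' hs'
    rw [Real.dist_eq, Real.dist_eq, NNReal.coe_one, one_mul]
    rcases le_total s s' with h | h
    · have h2 := hmonolip s hs s' hs' h
      rw [abs_of_nonpos (by linarith), abs_of_nonpos (by linarith)]
      linarith
    · have h2 := hmonolip s' hs' s hs h
      rw [abs_of_nonneg (by linarith), abs_of_nonneg (by linarith)]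
      linarith
  have hcont : ContinuousOn (fun s => (U s, s - U s)) (Icc bb sp) :=
    ContinuousOn.prodMk hUcont (continuousOn_id.sub hUcont)
  refine ⟨(fun s => (U s, s - U s)) '' Icc bb sp, ⟨?_, ?_, ?_⟩, ?_, ?_⟩
  · rintro r ⟨s, hs, rfl⟩
    exact hmemD s hs
  · exact (isConnected_Icc hbbsp).image _ hcont
  · rintro r ⟨s, hs, rfl⟩ r' ⟨s', hs', rfl⟩
    simp only
    rcases le_total s s' with h | h
    · have h2 := hmonolip s hs s' hs' h
      nlinarith
    · have h2 := hmonolip s' hs' s hs h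
      nlinarith
  · refine ⟨sp, ⟨hbbsp, le_rfl⟩, ?_⟩
    show (U sp, sp - U sp) = p
    rw [hUsp]
    exact Prod.ext rfl (by simp only [hsp]; ring)
  · refine ⟨bb, ⟨le_rfl, hbbsp⟩, ?_⟩
    show (U bb, bb - U bb) = (bb, 0)
    rw [hUbb]
    exact Prod.ext rfl (by simp)

lemma reach_top_limit {m n : ℕ} {Dε : Set (ℝ × ℝ)} (hclosed : IsClosed Dε)
    (hsub : Dε ⊆ Dfull m n) {p : ℝ × ℝ} (hp2 : p.2 < (n:ℝ))
    {t : ℕ → ℝ} {tt : ℝ} (hr : ∀ i, Reach Dε p (t i, (n:ℝ)))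
    (hle : ∀ i, t i ≤ tt) (hlim : Filter.Tendsto t Filter.atTop (nhds tt)) :
    Reach Dε p (tt, (n:ℝ)) := by
  choose γ hγ hpγ htγ using hr
  set sp := p.1 + p.2 with hsp
  have hp_le : ∀ i, p.1 ≤ t i := by
    intro i
    have hprod := (hγ i).2.2 _ (hpγ i) _ (htγ i)
    simp only at hprod
    nlinarith
  set c : ℕ → ℝ := fun i => t i + n with hc
  have hsp_lt : ∀ i, sp < c i := by
    intro i
    have := hp_le i
    simp only [hc, hsp]
    linarith
  have hsplt : sp < tt + n := lt_of_lt_of_le (hsp_lt 0) (by simp only [hc]; linarith [hle 0])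
  have hex : ∀ i, ∀ s, sp ≤ s → ∃ r ∈ γ i, r.1 + r.2 = min s (c i) := by
    intro i s hs
    refine monPath_exists_sum (hγ i) (hpγ i) (htγ i) ?_
    simp only
    constructor
    · exact le_min hs (hsp_lt i).le
    · exact min_le_right _ _
  set u : ℕ → ℝ → ℝ := fun i s => (ptAt (γ i) (min s (c i))).1 with hu
  have hminlip : ∀ (i : ℕ) {s s' : ℝ}, s ≤ s' →
      min s (c i) ≤ min s' (c i) ∧ min s' (c i) ≤ min s (c i) + (s' - s) := by
    intro i s s' hss
    constructor
    · exact min_le_min hss le_rfl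
    · rcases min_cases s' (c i) with ⟨e, h⟩ | ⟨e, h⟩ <;>
        rcases min_cases s (c i) with ⟨e2, h2⟩ | ⟨e2, h2⟩ <;> rw [e, e2] <;> linarith
  have hbd : ∀ s, sp ≤ s → ∀ i, 0 ≤ u i s ∧ u i s ≤ 2*(m:ℝ) :=
    fun s hs i => (mem_Dfull_iff.1 (hsub ((hγ i).1 (ptAt_mem (hex i s hs))))).1
  have hBdd : ∀ s, sp ≤ s → Filter.IsBoundedUnder (· ≤ ·) Filter.atTop (fun i => u i s) :=
    fun s hs => Filter.isBoundedUnder_of ⟨2*(m:ℝ), fun i => (hbd s hs i).2⟩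
  have hCob : ∀ s, sp ≤ s → Filter.IsCoboundedUnder (· ≤ ·) Filter.atTop (fun i => u i s) :=
    fun s hs => Filter.IsBoundedUnder.isCoboundedUnder_le
      (Filter.isBoundedUnder_of ⟨0, fun i => (hbd s hs i).1⟩)
  set U : ℝ → ℝ := fun s => Filter.limsup (fun i => u i s) Filter.atTop with hU
  have hmonolip : ∀ s, sp ≤ s → ∀ s', sp ≤ s' → s ≤ s' →
      U s ≤ U s' ∧ U s' ≤ U s + (s' - s) := by
    intro s hs s' hs' hss
    have h1 : ∀ i, u i s ≤ u i s' := fun i =>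
      (ptAt_mono (hγ i) (hex i s hs) (hex i s' hs') (hminlip i hss).1).1
    have h2 : ∀ i, u i s' ≤ u i s + (s' - s) := by
      intro i
      have := (ptAt_mono (hγ i) (hex i s hs) (hex i s' hs') (hminlip i hss).1).2
      have := (hminlip i hss).2
      simp only [hu] at *
      linarith
    constructor
    · exact Filter.limsup_le_limsup (Filter.Eventually.of_forall h1) (hCob s hs) (hBdd s' hs')
    · calc U s' ≤ Filter.limsup (fun i => u i s + (s' - s)) Filter.atTop :=
            Filter.limsup_le_limsup (Filter.Eventually.of_forall h2) (hCob s' hs')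
              (Filter.isBoundedUnder_of ⟨2*(m:ℝ) + (s' - s), fun i => by
                have := (hbd s hs i).2; linarith⟩)
        _ = U s + (s' - s) := limsup_add_const Filter.atTop (fun i => u i s) (s' - s)
              (hBdd s hs) (hCob s hs)
  have hUup : ∀ s, sp ≤ s → U s ≤ tt := by
    intro s hs
    have h1 : ∀ i, u i s ≤ tt := by
      intro i
      have hcc : s ⊓ c i ≤ c i := min_le_right _ _
      have hpair := monPath_pair_le (hγ i) (ptAt_mem (hex i s hs)) (htγ i)
        (by rw [ptAt_sum (hex i s hs)]; simp only; simp only [hc] at hcc; linarith)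
      have := hpair.1
      simp only [hu] at *
      linarith [hle i]
    exact Filter.limsup_le_of_le (hCob s hs) (Filter.Eventually.of_forall h1)
  have hevc : ∀ s, s < tt + n → ∀ᶠ i in Filter.atTop, s ≤ c i := by
    intro s hsn
    have : ∀ᶠ i in Filter.atTop, s - n < t i :=
      hlim.eventually (eventually_gt_nhds (by linarith))
    exact this.mono fun i hi => by simp only [hc]; linarith
  have hUlow : ∀ s, sp ≤ s → s < tt + n → s - n ≤ U s := by
    intro s hs hsn
    refine Filter.le_limsup_of_frequently_le ?_ (hBdd s hs)
    refine ((hevc s hsn).mono ?_).frequently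
    intro i hi
    have hsum : (ptAt (γ i) (min s (c i))).1 + (ptAt (γ i) (min s (c i))).2 = s := by
      rw [ptAt_sum (hex i s hs)]; exact min_eq_left hi
    have h2 := (mem_Dfull_iff.1 (hsub ((hγ i).1 (ptAt_mem (hex i s hs))))).2.2
    simp only [hu]
    linarith
  have hmemD : ∀ s, sp ≤ s → s < tt + n → (U s, s - U s) ∈ Dε := by
    intro s hs hsn
    rw [← hclosed.closure_eq]
    rw [Metric.mem_closure_iff]
    intro δ hδ
    have hfr : ∃ᶠ i in Filter.atTop, U s - δ/2 < u i s :=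
      Filter.frequently_lt_of_lt_limsup (hCob s hs) (by rw [hU]; simp only; linarith)
    have hev : ∀ᶠ i in Filter.atTop, u i s < U s + δ/2 :=
      Filter.eventually_lt_of_limsup_lt (by rw [hU]; simp only; linarith) (hBdd s hs)
    obtain ⟨i, hi1, hi2, hi3⟩ := (hfr.and_eventually (hev.and (hevc s hsn))).exists
    refine ⟨ptAt (γ i) (min s (c i)), (hγ i).1 (ptAt_mem (hex i s hs)), ?_⟩
    have hsum : (ptAt (γ i) (min s (c i))).1 + (ptAt (γ i) (min s (c i))).2 = s := by
      rw [ptAt_sum (hex i s hs)]; exact min_eq_left hi3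
    rw [Prod.dist_eq, max_lt_iff]
    constructor
    · rw [Real.dist_eq, abs_lt]
      constructor <;> simp only [hu] at hi1 hi2 ⊢ <;> linarith
    · rw [Real.dist_eq, abs_lt]
      have h2' : (ptAt (γ i) (min s (c i))).2 = s - u i s := by simp only [hu]; linarith
      rw [h2']
      constructor <;> simp only [hu] at hi1 hi2 ⊢ <;> linarith
  have hUsp : U sp = p.1 := by
    have h1 : ∀ i, u i sp = p.1 := by
      intro i
      have hmin : min sp (c i) = sp := min_eq_left (hsp_lt i).le
      have := ptAt_eq (hγ i) (hpγ i)
      simp only [hu]; rw [hmin]; simp only [hsp, this]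
    simp only [hU, h1, Filter.limsup_const]
  have hUcont : ContinuousOn U (Ico sp (tt + n)) := by
    apply LipschitzOnWith.continuousOn (K := 1)
    rw [lipschitzOnWith_iff_dist_le_mul]
    intro s hs s' hs'
    rw [Real.dist_eq, Real.dist_eq, NNReal.coe_one, one_mul]
    rcases le_total s s' with h | h
    · have h2 := hmonolip s hs.1 s' hs'.1 h
      rw [abs_of_nonpos (by linarith), abs_of_nonpos (by linarith)]
      linarith
    · have h2 := hmonolip s' hs'.1 s hs.1 h
      rw [abs_of_nonneg (by linarith), abs_of_nonneg (by linarith)]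
      linarith
  set F : ℝ → ℝ × ℝ := fun s => (U s, s - U s) with hF
  have hcont : ContinuousOn F (Ico sp (tt + n)) :=
    ContinuousOn.prodMk hUcont (continuousOn_id.sub hUcont)
  have himg : F '' Ico sp (tt + n) ⊆ Dε := by
    rintro r ⟨s, hs, rfl⟩
    exact hmemD s hs.1 hs.2
  have hIcoConn : IsConnected (Ico sp (tt + n)) := ⟨⟨sp, ⟨le_rfl, hsplt⟩⟩, isPreconnected_Ico⟩
  have hconn : IsConnected (F '' Ico sp (tt + n)) := hIcoConn.image F hcont
  have hclosept : (tt, (n:ℝ)) ∈ closure (F '' Ico sp (tt + n)) := by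
    rw [Metric.mem_closure_iff]
    intro δ hδ
    set s := max sp (tt + n - δ/2) with hsdef
    have hsJ : s ∈ Ico sp (tt + n) := ⟨le_max_left _ _, max_lt hsplt (by linarith)⟩
    refine ⟨F s, mem_image_of_mem _ hsJ, ?_⟩
    have hup := hUup s hsJ.1
    have hlow := hUlow s hsJ.1 hsJ.2
    have h1 : tt + n - s ≤ δ/2 := by
      have := le_max_right sp (tt + n - δ/2)
      simp only [hsdef] at *
      linarith
    rw [Prod.dist_eq, max_lt_iff]
    constructor
    · rw [Real.dist_eq, abs_lt]; constructor <;> simp only [hF] <;> linarith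
    · rw [Real.dist_eq, abs_lt]; constructor <;> simp only [hF] <;> linarith
  refine ⟨insert (tt, (n:ℝ)) (F '' Ico sp (tt + n)), ⟨?_, ?_, ?_⟩, ?_, ?_⟩
  · rintro r (rfl | hr)
    · have := closure_mono himg hclosept
      rwa [hclosed.closure_eq] at this
    · exact himg hr
  · refine hconn.subset_closure (subset_insert _ _) ?_
    rintro r (rfl | hr)
    · exact hclosept
    · exact subset_closure hr
  · have hkey : ∀ s, sp ≤ s → s < tt + n →
        (F s).1 ≤ tt ∧ (F s).2 ≤ (n:ℝ) := by
      intro s hs hsn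
      have := hUup s hs
      have := hUlow s hs hsn
      constructor <;> simp only [hF] <;> linarith
    rintro q (rfl | ⟨s, hs, rfl⟩) q' (rfl | ⟨s', hs', rfl⟩)
    · simp
    · have h2 := hkey s' hs'.1 hs'.2
      have : ((tt, (n:ℝ)).1 - (F s').1) * ((tt, (n:ℝ)).2 - (F s').2) ≥ 0 :=
        mul_nonneg (by linarith [h2.1]) (by linarith [h2.2])
      exact this
    · have h2 := hkey s hs.1 hs.2
      have : ((F s).1 - (tt, (n:ℝ)).1) * ((F s).2 - (tt, (n:ℝ)).2) ≥ 0 := by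
        nlinarith [h2.1, h2.2]
      exact this
    · rcases le_total s s' with h | h
      · have h2 := hmonolip s hs.1 s' hs'.1 h
        simp only [hF]
        nlinarith
      · have h2 := hmonolip s' hs'.1 s hs.1 h
        simp only [hF]
        nlinarith
  · right
    refine ⟨sp, ⟨le_rfl, hsplt⟩, ?_⟩
    show (U sp, sp - U sp) = p
    rw [hUsp]
    exact Prod.ext rfl (by simp only [hsp]; ring)
  · left
    rfl

lemma fCurve_natCast {k : ℕ} (x : ℕ → EuclideanSpace ℝ (Fin k)) (j : ℕ) :
    fCurve x (j : ℝ) = x j := by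
  rw [fCurve]
  rw [Int.floor_natCast, Int.fract_natCast, Int.toNat_natCast]
  simp

lemma fCurve_eqOn_affine {k : ℕ} (x : ℕ → EuclideanSpace ℝ (Fin k)) (j : ℕ) :
    EqOn (fCurve x) (fun t => (1 - (t - j)) • x j + (t - j) • x (j + 1))
      (Icc (j : ℝ) ((j : ℝ) + 1)) := by
  intro t ht
  rcases eq_or_lt_of_le ht.2 with he | hlt
  · have he' : t = ((j + 1 : ℕ) : ℝ) := by push_cast; linarith
    rw [he', fCurve_natCast]
    have : ((j + 1 : ℕ) : ℝ) - j = 1 := by push_cast; ring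
    simp only [this]
    push_cast
    simp
  · have hfl : ⌊t⌋ = (j : ℤ) := by
      rw [Int.floor_eq_iff]
      constructor
      · exact_mod_cast ht.1
      · exact_mod_cast hlt
    rw [fCurve, Int.fract, hfl, Int.toNat_natCast]
    simp only
    push_cast
    ring_nf

lemma contOn_union_closed {α : Type*} [TopologicalSpace α] {f : ℝ → α} {s t : Set ℝ}
    (hs : IsClosed s) (ht : IsClosed t)
    (h1 : ContinuousOn f s) (h2 : ContinuousOn f t) : ContinuousOn f (s ∪ t) := by
  intro z hz
  apply ContinuousWithinAt.union
  · rcases em (z ∈ s) with h | h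
    · exact h1 z h
    · exact continuousWithinAt_of_notMem_closure (by rwa [hs.closure_eq])
  · rcases em (z ∈ t) with h | h
    · exact h2 z h
    · exact continuousWithinAt_of_notMem_closure (by rwa [ht.closure_eq])

lemma fCurve_contOn_piece {k : ℕ} (x : ℕ → EuclideanSpace ℝ (Fin k)) (j : ℕ) :
    ContinuousOn (fCurve x) (Icc (j : ℝ) ((j : ℝ) + 1)) := by
  have hcont : Continuous fun t : ℝ => (1 - (t - (j:ℝ))) • x j + (t - (j:ℝ)) • x (j + 1) := by
    fun_prop
  exact hcont.continuousOn.congr (fCurve_eqOn_affine x j)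

lemma fCurve_contOn {k : ℕ} (x : ℕ → EuclideanSpace ℝ (Fin k)) (N : ℕ) :
    ContinuousOn (fCurve x) (Icc (0 : ℝ) N) := by
  induction N with
  | zero =>
    apply (fCurve_contOn_piece x 0).mono
    intro z hz
    simp only [Nat.cast_zero] at hz ⊢
    exact ⟨hz.1, by linarith [hz.2]⟩
  | succ N ih =>
    have hunion : Icc (0:ℝ) (N + 1 : ℕ) = Icc (0:ℝ) N ∪ Icc (N:ℝ) ((N:ℝ) + 1) := by
      rw [Icc_union_Icc_eq_Icc (by positivity) (by linarith [Nat.cast_nonneg (α := ℝ) N])]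
      norm_num
    rw [hunion]
    exact contOn_union_closed isClosed_Icc isClosed_Icc ih (fCurve_contOn_piece x N)

lemma fCurveExt_contOn {k : ℕ} (m : ℕ) (x : ℕ → EuclideanSpace ℝ (Fin k))
    (hx : x m = x 0) : ContinuousOn (fCurveExt m x) (Icc (0:ℝ) (2 * (m:ℝ))) := by
  have h1 : ContinuousOn (fCurveExt m x) (Icc (0:ℝ) m) := by
    apply (fCurve_contOn x m).congr
    intro z hz
    rw [fCurveExt, if_pos hz.2]
  have h2 : ContinuousOn (fCurveExt m x) (Icc (m:ℝ) (2 * m)) := by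
    have hcomp : ContinuousOn (fun z : ℝ => fCurve x (z - m)) (Icc (m:ℝ) (2 * m)) := by
      apply (fCurve_contOn x m).comp (Continuous.continuousOn (by fun_prop))
      intro z hz
      simp only [mem_Icc]
      constructor
      · linarith [hz.1]
      · linarith [hz.2]
    apply hcomp.congr
    intro z hz
    rw [fCurveExt]
    split_ifs with hzm
    · have hz' : z = (m : ℝ) := le_antisymm hzm hz.1
      rw [hz']
      show fCurve x (m:ℝ) = fCurve x ((m:ℝ) - m)
      have hm0 : (m:ℝ) - m = ((0:ℕ):ℝ) := by push_cast; ring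
      rw [hm0, fCurve_natCast, fCurve_natCast]
      exact hx
    · rfl
  have hunion : Icc (0:ℝ) (2 * (m:ℝ)) = Icc (0:ℝ) m ∪ Icc (m:ℝ) (2 * m) := by
    rw [Icc_union_Icc_eq_Icc (Nat.cast_nonneg m) (by linarith [Nat.cast_nonneg (α := ℝ) m])]
  rw [hunion]
  exact contOn_union_closed isClosed_Icc isClosed_Icc h1 h2

lemma isClosed_Dfree {k m n : ℕ} (x y : ℕ → EuclideanSpace ℝ (Fin k))
    (hx : x m = x 0) (ε : ℝ) : IsClosed (Dfree m n x y ε) := by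
  have hD : IsClosed (Dfull m n) := isClosed_Icc.prod isClosed_Icc
  have hcont : ContinuousOn (fun p : ℝ × ℝ => dist (fCurveExt m x p.1) (fCurve y p.2))
      (Dfull m n) := by
    have c1 : ContinuousOn (fun p : ℝ × ℝ => fCurveExt m x p.1) (Dfull m n) :=
      (fCurveExt_contOn m x hx).comp continuous_fst.continuousOn (fun p hp => hp.1)
    have c2 : ContinuousOn (fun p : ℝ × ℝ => fCurve y p.2) (Dfull m n) :=
      (fCurve_contOn y n).comp continuous_snd.continuousOn (fun p hp => hp.2)
    exact continuous_dist.comp_continuousOn (c1.prodMk c2)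
  have heq : Dfree m n x y ε = Dfull m n ∩
      (fun p : ℝ × ℝ => dist (fCurveExt m x p.1) (fCurve y p.2)) ⁻¹' (Iic ε) := by
    ext p
    simp [Dfree, Set.mem_sep_iff, Set.mem_preimage, Set.mem_Iic, Set.mem_inter_iff]
  rw [heq]
  exact hcont.preimage_isClosed_of_isClosed hD isClosed_Iic

theorem stmt0
    (k m n : ℕ) (hk : 1 ≤ k) (hm : 1 ≤ m) (hn : 1 ≤ n)
    (x y : ℕ → EuclideanSpace ℝ (Fin k)) (hx : x m = x 0) (hy : y n = y 0)
    (ε : ℝ) (hε : 0 ≤ ε)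
    (Dε : Set (ℝ × ℝ)) (hDε : Dε = Dfree m n x y ε)
    (ut ub : ℝ) (hut : ut ∈ Icc (0:ℝ) (2*(m:ℝ))) (hub : ub ∈ Icc (0:ℝ) (2*(m:ℝ))) :
    Reach Dε (ut, (n:ℝ)) (ub, (0:ℝ)) ↔
      ((ut, (n:ℝ)) ∈ gDown m Dε ∧ (ub, (0:ℝ)) ∈ gUp m n Dε ∧
        ut ≤ rUp m n Dε (ub, (0:ℝ)) ∧ ub ≤ rDown m Dε (ut, (n:ℝ))) := by
  have hnR : (0:ℝ) < (n:ℝ) := by exact_mod_cast Nat.pos_of_ne_zero (by omega)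
  have hn0 : ((ut, (n:ℝ)).2) ≠ 0 := by
    simp only
    exact ne_of_gt hnR
  have hsub : Dε ⊆ Dfull m n := by
    rw [hDε]
    exact fun p hp => hp.1
  have hclosed : IsClosed Dε := by
    rw [hDε]
    exact isClosed_Dfree x y hx ε
  have hbdd : BddAbove {u : ℝ | u ∈ Icc (0:ℝ) (2*(m:ℝ)) ∧ Reach Dε (ub, (0:ℝ)) (u, (n:ℝ))} :=
    ⟨2*(m:ℝ), fun v hv => hv.1.2⟩
  have hbdd' : BddAbove {u : ℝ | u ∈ Icc (0:ℝ) (2*(m:ℝ)) ∧ Reach Dε (ut, (n:ℝ)) (u, (0:ℝ))} :=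
    ⟨2*(m:ℝ), fun v hv => hv.1.2⟩
  constructor
  · rintro ⟨γ, hγ, h1, h2⟩
    refine ⟨⟨hγ.1 h1, (ub, (0:ℝ)), ⟨hub, rfl⟩, γ, hγ, h1, h2⟩,
      ⟨hγ.1 h2, (ut, (n:ℝ)), ⟨hut, rfl⟩, γ, hγ, h2, h1⟩, ?_, ?_⟩
    · exact le_csSup hbdd ⟨hut, γ, hγ, h2, h1⟩
    · rw [rDown, if_neg hn0]
      exact le_csSup hbdd' ⟨hub, γ, hγ, h1, h2⟩
  · rintro ⟨⟨hmem1, q, hqB, hreach1⟩, ⟨hmem2, q', hqT, hreach2⟩, hle1, hle2⟩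
    rw [rDown, if_neg hn0] at hle2
    rw [rUp] at hle1
    set Sd := {u : ℝ | u ∈ Icc (0:ℝ) (2*(m:ℝ)) ∧ Reach Dε (ut, (n:ℝ)) (u, (0:ℝ))} with hSd
    set Su := {u : ℝ | u ∈ Icc (0:ℝ) (2*(m:ℝ)) ∧ Reach Dε (ub, (0:ℝ)) (u, (n:ℝ))} with hSu
    have hqeq : q = (q.1, (0:ℝ)) := Prod.ext rfl hqB.2
    have hSdne : Sd.Nonempty := ⟨q.1, hqB.1, by rw [← hqeq]; exact hreach1⟩
    have hqeq' : q' = (q'.1, (n:ℝ)) := Prod.ext rfl hqT.2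
    have hSune : Su.Nonempty := ⟨q'.1, hqT.1, by rw [← hqeq']; exact hreach2⟩
    obtain ⟨bs, hbmono, hbtend, hbmem⟩ := exists_seq_tendsto_sSup hSdne hbdd'
    have hreachb : Reach Dε (ut, (n:ℝ)) (sSup Sd, (0:ℝ)) :=
      reach_bot_limit hclosed hsub (show (0:ℝ) < (ut, (n:ℝ)).2 from hnR)
        (fun i => (hbmem i).2) (fun i => le_csSup hbdd' (hbmem i)) hbtend
    obtain ⟨ts, htmono, httend, htmem⟩ := exists_seq_tendsto_sSup hSune hbdd
    have hreacht : Reach Dε (ub, (0:ℝ)) (sSup Su, (n:ℝ)) :=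
      reach_top_limit hclosed hsub (show ((ub, (0:ℝ)).2) < (n:ℝ) from hnR)
        (fun i => (htmem i).2) (fun i => le_csSup hbdd (htmem i)) httend
    obtain ⟨γ1, hγ1, hm1a, hm1b⟩ := hreacht
    obtain ⟨γ2, hγ2, hm2a, hm2b⟩ := hreachb
    exact cross hsub hγ1 hγ2 hm1a hm1b hm2b hm2a hle2 hle1 hnR
end
end

section
/- There exist monotone reparametrizations φ_X of X and φ_Y of Y such that d(φ_X(t), φ_Y(t)) ≤ ε for all t ∈ [0,1] if and only if there exists u ∈ [0,m] such that the points (u, 0) and (u+m, n) are mutually reachable. -/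
open Set

noncomputable section

/-- `W_m`: continuous non-decreasing functions `w : [0,1] → [0,m]` with
`w 0 = 0` and `w 1 = m`. -/
def IsW (m : ℕ) (w : ℝ → ℝ) : Prop :=
  ContinuousOn w (Icc (0:ℝ) 1) ∧ MonotoneOn w (Icc (0:ℝ) 1) ∧
    (∀ t ∈ Icc (0:ℝ) 1, w t ∈ Icc (0:ℝ) (m:ℝ)) ∧ w 0 = 0 ∧ w 1 = m

/-- The cyclic shift of `[0,m]` by `τ`. -/
def cshift (m : ℕ) (τ t : ℝ) : ℝ := if t + τ ≤ m then t + τ else t + τ - m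

/-- A monotone reparametrization of the closed `m`-gonal curve with vertices `x`. -/
def IsReparam {k : ℕ} (m : ℕ) (x : ℕ → EuclideanSpace ℝ (Fin k))
    (φ : ℝ → EuclideanSpace ℝ (Fin k)) : Prop :=
  ∃ w : ℝ → ℝ, ∃ τ ∈ Icc (0:ℝ) (m:ℝ), IsW m w ∧
    ∀ t ∈ Icc (0:ℝ) 1, φ t = fCurve x (cshift m τ (w t))

lemma fCurve_nat {k : ℕ} (x : ℕ → EuclideanSpace ℝ (Fin k)) (j : ℕ) :
    fCurve x (j:ℝ) = x j := by
  simp [fCurve, Int.fract_natCast, Int.floor_natCast]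

lemma mono_ite {f g : ℝ → ℝ} {c : ℝ} (hf : Monotone f) (hg : Monotone g)
    (h : f c = g c) : Monotone (fun t => if t ≤ c then f t else g t) := by
  intro a b hab
  by_cases ha : a ≤ c <;> by_cases hb : b ≤ c <;> simp only [ha, hb, if_true, if_false]
  · exact hf hab
  · exact (hf ha).trans (h ▸ hg (le_of_not_ge hb))
  · exact absurd (hab.trans hb) ha
  · exact hg hab

lemma cont_ite {f g : ℝ → ℝ} {c : ℝ} (hf : Continuous f) (hg : Continuous g)
    (h : f c = g c) : Continuous (fun t => if t ≤ c then f t else g t) := by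
  exact hf.if_le hg continuous_id continuous_const (by rintro x rfl; exact h)

lemma cshift_mem {m : ℕ} {τ a : ℝ} (hτ : τ ∈ Icc (0:ℝ) m) (ha : a ∈ Icc (0:ℝ) m) :
    cshift m τ a ∈ Icc (0:ℝ) m := by
  obtain ⟨h1,h2⟩ := hτ; obtain ⟨h3,h4⟩ := ha
  unfold cshift; split_ifs with h <;> constructor <;> linarith

lemma fCurve_congr {k : ℕ} {x : ℕ → EuclideanSpace ℝ (Fin k)} {a b : ℝ}
    (h : a = b) : fCurve x a = fCurve x b := by rw [h]

lemma fCurve_wrap {k : ℕ} {m : ℕ} {x : ℕ → EuclideanSpace ℝ (Fin k)} (hx : x m = x 0) :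
    fCurve x (m:ℝ) = fCurve x 0 := by
  rw [fCurve_nat, show ((0:ℝ) = ((0:ℕ):ℝ)) by norm_num, fCurve_nat, hx]

lemma extA {k : ℕ} {m : ℕ} {x : ℕ → EuclideanSpace ℝ (Fin k)} (_hx : x m = x 0)
    {τ a0 a : ℝ} (hτ : τ ∈ Icc (0:ℝ) m) (ha0 : a0 ∈ Icc (0:ℝ) m) (ha : a ∈ Icc (0:ℝ) m)
    (hle : a0 ≤ a) :
    fCurveExt m x (cshift m τ a0 + a - a0) = fCurve x (cshift m τ a) := by
  obtain ⟨h1,h2⟩ := hτ; obtain ⟨h3,h4⟩ := ha0; obtain ⟨h5,h6⟩ := ha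
  unfold fCurveExt cshift
  split_ifs <;> first
    | (apply fCurve_congr; ring1)
    | (exfalso; linarith)

lemma extB {k : ℕ} {m : ℕ} {x : ℕ → EuclideanSpace ℝ (Fin k)} (hx : x m = x 0)
    {τ a0 a : ℝ} (hτ : τ ∈ Icc (0:ℝ) m) (ha0 : a0 ∈ Icc (0:ℝ) m) (ha : a ∈ Icc (0:ℝ) m)
    (hle : a ≤ a0) :
    fCurveExt m x (cshift m τ a0 + m - a0 + a) = fCurve x (cshift m τ a) := by
  obtain ⟨h1,h2⟩ := hτ; obtain ⟨h3,h4⟩ := ha0; obtain ⟨h5,h6⟩ := ha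
  unfold fCurveExt cshift
  split_ifs with hA hB hC <;> first
    | (apply fCurve_congr; ring1)
    | (exfalso; linarith)
    | skip
  -- special case: hA : a0 + τ ≤ m, hB : a0 + τ + m - a0 + a ≤ m, hC : a + τ ≤ m
  · have hm : a0 + τ + (m:ℝ) - a0 + a = (m:ℝ) := by linarith
    rw [hm, fCurve_wrap hx]
    apply fCurve_congr; linarith

lemma Yval1 {k : ℕ} {n : ℕ} {y : ℕ → EuclideanSpace ℝ (Fin k)} (hy : y n = y 0)
    {τ b : ℝ} (hτ : τ ∈ Icc (0:ℝ) n) (hb : b ∈ Icc (0:ℝ) n) (hge : (n:ℝ) - τ ≤ b) :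
    fCurve y (b + τ - n) = fCurve y (cshift n τ b) := by
  obtain ⟨h1,h2⟩ := hτ; obtain ⟨h3,h4⟩ := hb
  unfold cshift
  split_ifs with h
  · have h0 : b + τ - (n:ℝ) = 0 := by linarith
    rw [h0, ← fCurve_wrap hy]
    apply fCurve_congr; linarith
  · rfl


theorem stmt1
    (k m n : ℕ) (hk : 1 ≤ k) (hm : 1 ≤ m) (hn : 1 ≤ n)
    (x y : ℕ → EuclideanSpace ℝ (Fin k)) (hx : x m = x 0) (hy : y n = y 0)
    (ε : ℝ) (hε : 0 ≤ ε)
    (Dε : Set (ℝ × ℝ)) (hDε : Dε = Dfree m n x y ε) :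
    (∃ φX φY : ℝ → EuclideanSpace ℝ (Fin k),
        IsReparam m x φX ∧ IsReparam n y φY ∧
        ∀ t ∈ Icc (0:ℝ) 1, dist (φX t) (φY t) ≤ ε) ↔
      ∃ u ∈ Icc (0:ℝ) (m:ℝ), Reach Dε (u, (0:ℝ)) (u + m, (n:ℝ)) := by
  constructor
  · rintro ⟨φX, φY, ⟨wX, τX, hτX, ⟨hcX, hmX, hrX, h0X, h1X⟩, heqX⟩,
      ⟨wY, τY, hτY, ⟨hcY, hmY, hrY, h0Y, h1Y⟩, heqY⟩, hd⟩
    -- find the wrap time t⋆ for Y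
    have hiv : ((n:ℝ) - τY) ∈ Icc (wY 0) (wY 1) := by
      rw [h0Y, h1Y]
      constructor <;> [linarith [hτY.2]; linarith [hτY.1]]
    obtain ⟨ts, htsmem, hts⟩ := intermediate_value_Icc zero_le_one hcY hiv
    obtain ⟨hts0, hts1⟩ := htsmem
    -- clamping to [0,1]
    set cl : ℝ → ℝ := fun r => max 0 (min 1 r) with hcl
    have hclmem : ∀ r, cl r ∈ Icc (0:ℝ) 1 :=
      fun r => ⟨le_max_left _ _, max_le zero_le_one (min_le_left _ _)⟩
    have hclid : ∀ r ∈ Icc (0:ℝ) 1, cl r = r := by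
      intro r hr
      simp only [hcl]
      rw [min_eq_right hr.2, max_eq_right hr.1]
    have hclmono : Monotone cl :=
      fun a b h => max_le_max le_rfl (min_le_min le_rfl h)
    have hclcont : Continuous cl :=
      continuous_const.max (continuous_const.min continuous_id)
    set wbX : ℝ → ℝ := fun r => wX (cl r) with hwbX
    set wbY : ℝ → ℝ := fun r => wY (cl r) with hwbY
    have hwbXmono : Monotone wbX :=
      fun a b h => hmX (hclmem a) (hclmem b) (hclmono h)
    have hwbYmono : Monotone wbY :=
      fun a b h => hmY (hclmem a) (hclmem b) (hclmono h)
    have hwbXcont : Continuous wbX := hcX.comp_continuous hclcont hclmem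
    have hwbYcont : Continuous wbY := hcY.comp_continuous hclcont hclmem
    have hwbXid : ∀ r ∈ Icc (0:ℝ) 1, wbX r = wX r := fun r hr => by
      simp only [hwbX]; rw [hclid r hr]
    have hwbYid : ∀ r ∈ Icc (0:ℝ) 1, wbY r = wY r := fun r hr => by
      simp only [hwbY]; rw [hclid r hr]
    clear_value cl wbX wbY
    -- data
    set c : ℝ := cshift m τX (wX ts) with hc
    have hcm : c ∈ Icc (0:ℝ) m := cshift_mem hτX (hrX ts ⟨hts0, hts1⟩)
    set a0 : ℝ := wX ts with ha0
    have ha0m : a0 ∈ Icc (0:ℝ) m := hrX ts ⟨hts0, hts1⟩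
    set t1 : ℝ := 1 - ts with ht1
    have ht10 : 0 ≤ t1 := by simp only [ht1]; linarith
    have ht11 : t1 ≤ 1 := by simp only [ht1]; linarith
    clear_value c a0 t1
    -- the two coordinate functions of the path
    set U : ℝ → ℝ := fun t => if t ≤ t1 then c + wbX (t + ts) - a0
      else c + m - a0 + wbX (t - t1) with hU
    set V : ℝ → ℝ := fun t => if t ≤ t1 then wbY (t + ts) - ((n:ℝ) - τY)
      else wbY (t - t1) + τY with hV
    clear_value U V
    have hj1 : (1:ℝ) = t1 + ts := by simp only [ht1]; ring
    have hwbX1 : wbX 1 = m := by rw [hwbXid 1 ⟨zero_le_one, le_rfl⟩, h1X]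
    have hwbX0 : wbX 0 = 0 := by rw [hwbXid 0 ⟨le_rfl, zero_le_one⟩, h0X]
    have hwbY1 : wbY 1 = n := by rw [hwbYid 1 ⟨zero_le_one, le_rfl⟩, h1Y]
    have hwbY0 : wbY 0 = 0 := by rw [hwbYid 0 ⟨le_rfl, zero_le_one⟩, h0Y]
    have hUjun : c + wbX (t1 + ts) - a0 = c + m - a0 + wbX (t1 - t1) := by
      rw [← hj1, hwbX1, sub_self, hwbX0]; ring
    have hVjun : wbY (t1 + ts) - ((n:ℝ) - τY) = wbY (t1 - t1) + τY := by
      rw [← hj1, hwbY1, sub_self, hwbY0]; ring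
    have hUmono : Monotone U := by
      rw [hU]
      apply mono_ite (f := fun t => c + wbX (t + ts) - a0)
        (g := fun t => c + m - a0 + wbX (t - t1))
      · intro a b h
        have := hwbXmono (by linarith : a + ts ≤ b + ts)
        dsimp only; linarith
      · intro a b h
        have := hwbXmono (sub_le_sub_right h t1)
        dsimp only; linarith
      · exact hUjun
    have hVmono : Monotone V := by
      rw [hV]
      apply mono_ite (f := fun t => wbY (t + ts) - ((n:ℝ) - τY))
        (g := fun t => wbY (t - t1) + τY)
      · intro a b h
        have := hwbYmono (by linarith : a + ts ≤ b + ts)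
        dsimp only; linarith
      · intro a b h
        have := hwbYmono (sub_le_sub_right h t1)
        dsimp only; linarith
      · exact hVjun
    have hUcont : Continuous U := by
      rw [hU]
      apply cont_ite (f := fun t => c + wbX (t + ts) - a0)
        (g := fun t => c + m - a0 + wbX (t - t1))
      · fun_prop
      · fun_prop
      · exact hUjun
    have hVcont : Continuous V := by
      rw [hV]
      apply cont_ite (f := fun t => wbY (t + ts) - ((n:ℝ) - τY))
        (g := fun t => wbY (t - t1) + τY)
      · fun_prop
      · fun_prop
      · exact hVjun
    set g : ℝ → ℝ × ℝ := fun t => (U t, V t) with hg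
    have hgcont : Continuous g := hUcont.prodMk hVcont
    set γ : Set (ℝ × ℝ) := g '' Icc 0 1 with hγ
    clear_value g γ
    -- γ ⊆ Dε
    have hsub : γ ⊆ Dε := by
      intro p hp
      rw [hγ] at hp
      obtain ⟨t, ht, rfl⟩ := hp
      obtain ⟨ht0, ht1'⟩ := ht
      rw [hDε]
      simp only [hg]
      by_cases hb : t ≤ t1
      · -- first branch: original time s = t + ts
        have hsmem : t + ts ∈ Icc (0:ℝ) 1 := by
          constructor
          · linarith
          · simp only [ht1] at hb; linarith
        have hUval : U t = c + wX (t + ts) - a0 := by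
          simp only [hU, if_pos hb, hwbXid _ hsmem]
        have hVval : V t = wY (t + ts) - ((n:ℝ) - τY) := by
          simp only [hV, if_pos hb, hwbYid _ hsmem]
        have haX : wX (t + ts) ∈ Icc (0:ℝ) m := hrX _ hsmem
        have haY : wY (t + ts) ∈ Icc (0:ℝ) n := hrY _ hsmem
        have hle' : wX ts ≤ wX (t + ts) := hmX ⟨hts0, hts1⟩ hsmem (by linarith)
        have hle : a0 ≤ wX (t + ts) := by rw [ha0]; exact hle'
        have hleY : (n:ℝ) - τY ≤ wY (t + ts) := by
          rw [← hts]; exact hmY ⟨hts0, hts1⟩ hsmem (by linarith)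
        have eX : fCurveExt m x (U t) = φX (t + ts) := by
          rw [hUval, heqX _ hsmem]
          have : c + wX (t + ts) - a0 = cshift m τX (wX ts) + wX (t + ts) - wX ts := by
            simp only [hc, ha0]
          rw [this]
          exact extA hx hτX (hrX ts ⟨hts0, hts1⟩) haX hle'
        have eY : fCurve y (V t) = φY (t + ts) := by
          rw [hVval, heqY _ hsmem]
          have : wY (t + ts) - ((n:ℝ) - τY) = wY (t + ts) + τY - n := by ring
          rw [this]
          exact Yval1 hy hτY haY hleY
        refine ⟨⟨⟨?_, ?_⟩, ⟨?_, ?_⟩⟩, ?_⟩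
        · (try dsimp only); rw [hUval]; obtain ⟨q1, q2⟩ := hcm; obtain ⟨q3, q4⟩ := ha0m
          obtain ⟨q5, q6⟩ := haX; linarith
        · (try dsimp only); rw [hUval]; obtain ⟨q1, q2⟩ := hcm; obtain ⟨q3, q4⟩ := ha0m
          obtain ⟨q5, q6⟩ := haX; linarith
        · (try dsimp only); rw [hVval]; obtain ⟨q1, q2⟩ := haY; linarith
        · (try dsimp only); rw [hVval]; obtain ⟨q1, q2⟩ := haY; obtain ⟨q3, q4⟩ := hτY; linarith
        · show dist (fCurveExt m x (U t)) (fCurve y (V t)) ≤ ε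
          rw [eX, eY]; exact hd _ hsmem
      · -- second branch: original time s = t - t1
        have hsmem : t - t1 ∈ Icc (0:ℝ) 1 := by
          constructor
          · linarith [not_le.mp hb]
          · simp only [ht1]; linarith
        have hUval : U t = c + m - a0 + wX (t - t1) := by
          simp only [hU, if_neg hb, hwbXid _ hsmem]
        have hVval : V t = wY (t - t1) + τY := by
          simp only [hV, if_neg hb, hwbYid _ hsmem]
        have haX : wX (t - t1) ∈ Icc (0:ℝ) m := hrX _ hsmem
        have haY : wY (t - t1) ∈ Icc (0:ℝ) n := hrY _ hsmem
        have hle' : wX (t - t1) ≤ wX ts := hmX hsmem ⟨hts0, hts1⟩ (by simp only [ht1]; linarith)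
        have hle : wX (t - t1) ≤ a0 := by rw [ha0]; exact hle'
        have hleY : wY (t - t1) ≤ (n:ℝ) - τY := by
          rw [← hts]; exact hmY hsmem ⟨hts0, hts1⟩ (by simp only [ht1]; linarith)
        have eX : fCurveExt m x (U t) = φX (t - t1) := by
          rw [hUval, heqX _ hsmem]
          have : c + (m:ℝ) - a0 + wX (t - t1)
              = cshift m τX (wX ts) + m - wX ts + wX (t - t1) := by
            simp only [hc, ha0]
          rw [this]
          exact extB hx hτX (hrX ts ⟨hts0, hts1⟩) haX hle'
        have eY : fCurve y (V t) = φY (t - t1) := by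
          rw [hVval, heqY _ hsmem]
          have hcs : cshift n τY (wY (t - t1)) = wY (t - t1) + τY := by
            unfold cshift
            rw [if_pos (by linarith)]
          rw [hcs]
        refine ⟨⟨⟨?_, ?_⟩, ⟨?_, ?_⟩⟩, ?_⟩
        · (try dsimp only); rw [hUval]; obtain ⟨q1, q2⟩ := hcm; obtain ⟨q3, q4⟩ := ha0m
          obtain ⟨q5, q6⟩ := haX; linarith
        · (try dsimp only); rw [hUval]; obtain ⟨q1, q2⟩ := hcm; obtain ⟨q3, q4⟩ := ha0m
          obtain ⟨q5, q6⟩ := haX; linarith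
        · (try dsimp only); rw [hVval]; obtain ⟨q1, q2⟩ := haY; obtain ⟨q3, q4⟩ := hτY; linarith
        · (try dsimp only); rw [hVval]; obtain ⟨q1, q2⟩ := haY; linarith
        · show dist (fCurveExt m x (U t)) (fCurve y (V t)) ≤ ε
          rw [eX, eY]; exact hd _ hsmem
    -- γ is a monotone path
    have hpath : IsMonPath Dε γ := by
      refine ⟨hsub, ?_, ?_⟩
      · rw [hγ]
        exact (isConnected_Icc zero_le_one).image g hgcont.continuousOn
      intro p hp q hq
      rw [hγ] at hp hq
      obtain ⟨t, _, rfl⟩ := hp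
      obtain ⟨t', _, rfl⟩ := hq
      simp only [hg]
      try dsimp only
      rcases le_total t t' with h | h
      · have h1 := hUmono h
        have h2 := hVmono h
        have h3 := mul_nonneg (sub_nonneg.2 h1) (sub_nonneg.2 h2)
        have h4 : (U t - U t') * (V t - V t') = (U t' - U t) * (V t' - V t) := by ring
        rw [ge_iff_le, h4]
        exact h3
      · have h1 := hUmono h
        have h2 := hVmono h
        have h3 := mul_nonneg (sub_nonneg.2 h1) (sub_nonneg.2 h2)
        rw [ge_iff_le]
        exact mul_nonneg (by linarith) (by linarith)
    -- endpoints
    have hU0 : U 0 = c := by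
      simp only [hU]
      rw [if_pos ht10, zero_add, hwbXid ts ⟨hts0, hts1⟩, ← ha0]; ring
    have hV0 : V 0 = 0 := by
      simp only [hV]
      rw [if_pos ht10, zero_add, hwbYid ts ⟨hts0, hts1⟩, hts]; ring
    have hU1 : U 1 = c + (m:ℝ) := by
      by_cases h1b : (1:ℝ) ≤ t1
      · have hts0' : ts = 0 := le_antisymm (by simp only [ht1] at h1b; linarith) hts0
        have ha00 : a0 = 0 := by rw [ha0, hts0', h0X]
        simp only [hU]
        rw [if_pos h1b, hts0', add_zero, hwbX1, ha00]; ring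
      · have e1 : (1:ℝ) - t1 = ts := by simp only [ht1]; ring
        simp only [hU]
        rw [if_neg h1b, e1, hwbXid ts ⟨hts0, hts1⟩, ← ha0]; ring
    have hV1 : V 1 = (n:ℝ) := by
      by_cases h1b : (1:ℝ) ≤ t1
      · have hts0' : ts = 0 := le_antisymm (by simp only [ht1] at h1b; linarith) hts0
        have hτYn : τY = (n:ℝ) := by
          have h5 := hts
          rw [hts0', h0Y] at h5
          linarith
        simp only [hV]
        rw [if_pos h1b, hts0', add_zero, hwbY1, hτYn]; ring
      · have e1 : (1:ℝ) - t1 = ts := by simp only [ht1]; ring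
        simp only [hV]
        rw [if_neg h1b, e1, hwbYid ts ⟨hts0, hts1⟩, hts]; ring
    have hg0 : g 0 = (c, (0:ℝ)) := by
      simp only [hg]; rw [hU0, hV0]
    have hg1 : g 1 = (c + (m:ℝ), (n:ℝ)) := by
      simp only [hg]; rw [hU1, hV1]
    refine ⟨c, hcm, γ, hpath, ?_, ?_⟩
    · rw [← hg0, hγ]; exact ⟨0, ⟨le_rfl, zero_le_one⟩, rfl⟩
    · rw [← hg1, hγ]; exact ⟨1, ⟨zero_le_one, le_rfl⟩, rfl⟩
  · rintro ⟨u, hu, γ, ⟨hsub, hconn, hmono⟩, hp0, hp1⟩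
    have hmn0 : (0:ℝ) ≤ (m:ℝ) + n := by positivity
    set I : Set ℝ := Icc u (u + ((m:ℝ) + n)) with hI
    -- uniqueness of points of γ with a given coordinate sum
    have huniq : ∀ p ∈ γ, ∀ q ∈ γ, p.1 + p.2 = q.1 + q.2 → p = q := by
      intro p hp q hq hsum
      have h := hmono p hp q hq
      have h1 : p.2 = q.2 := by nlinarith [h, hsum]
      have h2 : p.1 = q.1 := by linarith
      exact Prod.ext h2 h1
    -- surjectivity of the coordinate sum onto I
    have himg : I ⊆ (fun p : ℝ × ℝ => p.1 + p.2) '' γ := by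
      have hconn' : IsPreconnected ((fun p : ℝ × ℝ => p.1 + p.2) '' γ) :=
        (hconn.image _ ((continuous_fst.add continuous_snd).continuousOn)).isPreconnected
      exact hconn'.Icc_subset ⟨(u, 0), hp0, by simp⟩ ⟨((u + (m:ℝ), (n:ℝ)) : ℝ × ℝ), hp1, by simp; ring⟩
    have hex : ∀ s : ℝ, ∃ p : ℝ × ℝ, s ∈ I → p ∈ γ ∧ p.1 + p.2 = s := by
      intro s
      by_cases hs : s ∈ I
      · obtain ⟨p, hpγ, hps⟩ := himg hs
        exact ⟨p, fun _ => ⟨hpγ, hps⟩⟩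
      · exact ⟨(0, 0), fun h => absurd h hs⟩
    choose P hP using hex
    -- monotonicity of the two coordinates of P
    have hMF : ∀ s ∈ I, ∀ s' ∈ I, s ≤ s' →
        (P s).1 ≤ (P s').1 ∧ (P s).2 ≤ (P s').2 := by
      intro s hs s' hs' hss
      obtain ⟨hγ1, hsum1⟩ := hP s hs
      obtain ⟨hγ2, hsum2⟩ := hP s' hs'
      have h := hmono _ hγ1 _ hγ2
      constructor <;> nlinarith [h]
    have humem : u ∈ I := by constructor <;> simp <;> linarith
    have hvmem : u + ((m:ℝ) + n) ∈ I := by constructor <;> simp <;> linarith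
    have hPu : P u = (u, 0) := by
      refine huniq _ (hP u humem).1 _ hp0 ?_
      rw [(hP u humem).2]; simp
    have hPv : P (u + ((m:ℝ) + n)) = ((u + (m:ℝ), (n:ℝ)) : ℝ × ℝ) := by
      refine huniq _ (hP _ hvmem).1 _ hp1 ?_
      rw [(hP _ hvmem).2]; simp; ring
    -- Lipschitz continuity of the coordinates of P on I
    have key : ∀ s ∈ I, ∀ s' ∈ I, s ≤ s' →
        ((P s').1 - (P s).1 ≤ s' - s ∧ (P s').2 - (P s).2 ≤ s' - s) := by
      intro s hs s' hs' hss
      obtain ⟨hm1, hm2⟩ := hMF s hs s' hs' hss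
      have e1 := (hP s hs).2
      have e2 := (hP s' hs').2
      constructor <;> linarith
    have hLip1 : LipschitzOnWith 1 (fun s => (P s).1) I := by
      apply LipschitzOnWith.of_dist_le_mul
      intro s hs s' hs'
      rw [Real.dist_eq, Real.dist_eq, NNReal.coe_one, one_mul]
      rcases le_total s s' with h | h
      · have h1 := (hMF s hs s' hs' h).1
        have h2 := (key s hs s' hs' h).1
        rw [abs_of_nonpos (by linarith), abs_of_nonpos (by linarith)]
        linarith
      · have h1 := (hMF s' hs' s hs h).1
        have h2 := (key s' hs' s hs h).1
        rw [abs_of_nonneg (by linarith), abs_of_nonneg (by linarith)]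
        linarith
    have hLip2 : LipschitzOnWith 1 (fun s => (P s).2) I := by
      apply LipschitzOnWith.of_dist_le_mul
      intro s hs s' hs'
      rw [Real.dist_eq, Real.dist_eq, NNReal.coe_one, one_mul]
      rcases le_total s s' with h | h
      · have h1 := (hMF s hs s' hs' h).2
        have h2 := (key s hs s' hs' h).2
        rw [abs_of_nonpos (by linarith), abs_of_nonpos (by linarith)]
        linarith
      · have h1 := (hMF s' hs' s hs h).2
        have h2 := (key s' hs' s hs h).2
        rw [abs_of_nonneg (by linarith), abs_of_nonneg (by linarith)]
        linarith
    -- the time change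
    obtain ⟨σ, hσ⟩ : ∃ σ : ℝ → ℝ, σ = fun t => u + ((m:ℝ) + n) * t := ⟨_, rfl⟩
    have hσmap : ∀ t ∈ Icc (0:ℝ) 1, σ t ∈ I := by
      intro t ht
      obtain ⟨ht0, ht1⟩ := ht
      simp only [hσ, hI, mem_Icc]
      constructor <;> nlinarith
    have hσmono : ∀ t ∈ Icc (0:ℝ) 1, ∀ t' ∈ Icc (0:ℝ) 1, t ≤ t' → σ t ≤ σ t' := by
      intro t _ t' _ h
      have := mul_le_mul_of_nonneg_left h hmn0
      simp only [hσ]; linarith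
    have hσcont : Continuous σ := by rw [hσ]; fun_prop
    have hσ0 : σ 0 = u := by simp [hσ]
    have hσ1 : σ 1 = u + ((m:ℝ) + n) := by simp [hσ]
    obtain ⟨wX, hwX⟩ : ∃ wX : ℝ → ℝ, wX = fun t => (P (σ t)).1 - u := ⟨_, rfl⟩
    obtain ⟨wY, hwY⟩ : ∃ wY : ℝ → ℝ, wY = fun t => (P (σ t)).2 := ⟨_, rfl⟩
    -- ranges
    have hrangeX : ∀ t ∈ Icc (0:ℝ) 1, u ≤ (P (σ t)).1 ∧ (P (σ t)).1 ≤ u + m := by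
      intro t ht
      have hs := hσmap t ht
      have h1 := (hMF u humem _ hs hs.1).1
      have h2 := (hMF _ hs _ hvmem hs.2).1
      rw [hPu] at h1; rw [hPv] at h2
      exact ⟨h1, h2⟩
    have hrangeY : ∀ t ∈ Icc (0:ℝ) 1, 0 ≤ (P (σ t)).2 ∧ (P (σ t)).2 ≤ n := by
      intro t ht
      have hs := hσmap t ht
      have h1 := (hMF u humem _ hs hs.1).2
      have h2 := (hMF _ hs _ hvmem hs.2).2
      rw [hPu] at h1; rw [hPv] at h2
      exact ⟨h1, h2⟩
    -- IsW for wX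
    have hWX : IsW m wX := by
      refine ⟨?_, ?_, ?_, ?_, ?_⟩
      · rw [hwX]
        exact (hLip1.continuousOn.comp hσcont.continuousOn
          (fun t ht => hσmap t ht)).sub continuousOn_const
      · intro t ht t' ht' h
        have := (hMF _ (hσmap t ht) _ (hσmap t' ht') (hσmono t ht t' ht' h)).1
        simp only [hwX]; linarith
      · intro t ht
        obtain ⟨h1, h2⟩ := hrangeX t ht
        simp only [hwX, mem_Icc]
        constructor <;> linarith
      · simp only [hwX]
        rw [hσ0, hPu]
        simp
      · simp only [hwX]
        rw [hσ1, hPv]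
        simp
    have hWY : IsW n wY := by
      refine ⟨?_, ?_, ?_, ?_, ?_⟩
      · rw [hwY]
        exact hLip2.continuousOn.comp hσcont.continuousOn (fun t ht => hσmap t ht)
      · intro t ht t' ht' h
        simp only [hwY]
        exact (hMF _ (hσmap t ht) _ (hσmap t' ht') (hσmono t ht t' ht' h)).2
      · intro t ht
        simp only [hwY, mem_Icc]
        obtain ⟨h1, h2⟩ := hrangeY t ht
        exact ⟨h1, h2⟩
      · simp only [hwY]
        rw [hσ0, hPu]
      · simp only [hwY]
        rw [hσ1, hPv]
    refine ⟨fun t => fCurve x (cshift m u (wX t)), fun t => fCurve y (cshift n 0 (wY t)),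
      ⟨wX, u, hu, hWX, fun t _ => rfl⟩, ⟨wY, 0, by constructor <;> simp, hWY, fun t _ => rfl⟩, ?_⟩
    intro t ht
    have hs := hσmap t ht
    have hmemDε : P (σ t) ∈ Dε := hsub (hP _ hs).1
    rw [hDε] at hmemDε
    obtain ⟨hfull, hdist⟩ := hmemDε
    have e1 : fCurve x (cshift m u (wX t)) = fCurveExt m x ((P (σ t)).1) := by
      simp only [hwX]
      unfold cshift fCurveExt
      rw [sub_add_cancel]
      split_ifs <;> rfl
    have e2 : fCurve y (cshift n 0 (wY t)) = fCurve y ((P (σ t)).2) := by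
      simp only [hwY]
      unfold cshift
      rw [add_zero, if_pos ((hrangeY t ht).2)]
    show dist (fCurve x (cshift m u (wX t))) (fCurve y (cshift n 0 (wY t))) ≤ ε
    rw [e1, e2]
    exact hdist

end
end

section
/- If γ_t is a monotone path containing the points (u_t, n) and (r_t, 0), γ_b is a monotone path containing the points (u_b, 0) and (r_b, n), and u_t ≤ r_b and u_b ≤ r_t, then γ_t ∩ γ_b ≠ ∅. -/
open Set

noncomputable section

/-- On a monotone path, the coordinate sum orders both coordinates. -/
lemma monpath_coord_le {Dε γ : Set (ℝ × ℝ)} (hγ : IsMonPath Dε γ)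
    {p q : ℝ × ℝ} (hp : p ∈ γ) (hq : q ∈ γ) (h : p.1 + p.2 ≤ q.1 + q.2) :
    p.1 ≤ q.1 ∧ p.2 ≤ q.2 := by
  have hm := hγ.2.2 p hp q hq
  constructor
  · by_contra h'
    push_neg at h'
    nlinarith
  · by_contra h'
    push_neg at h'
    nlinarith

lemma monpath_eq_of_sum_eq {Dε γ : Set (ℝ × ℝ)} (hγ : IsMonPath Dε γ)
    {p q : ℝ × ℝ} (hp : p ∈ γ) (hq : q ∈ γ) (h : p.1 + p.2 = q.1 + q.2) :
    p = q := by
  have h1 := monpath_coord_le hγ hp hq h.le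
  have h2 := monpath_coord_le hγ hq hp h.ge
  exact Prod.ext (le_antisymm h1.1 h2.1) (le_antisymm h1.2 h2.2)

/-- Intermediate value theorem for the coordinate sum on a monotone path. -/
lemma monpath_exists_sum {Dε γ : Set (ℝ × ℝ)} (hγ : IsMonPath Dε γ)
    {p q : ℝ × ℝ} (hp : p ∈ γ) (hq : q ∈ γ) :
    ∀ s ∈ Icc (p.1 + p.2) (q.1 + q.2), ∃ r, r ∈ γ ∧ r.1 + r.2 = s := by
  intro s hs
  have hc : ContinuousOn (fun r : ℝ × ℝ => r.1 + r.2) γ :=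
    (continuous_fst.add continuous_snd).continuousOn
  have := hγ.2.1.isPreconnected.intermediate_value hp hq hc hs
  obtain ⟨r, hr, hrs⟩ := this
  exact ⟨r, hr, hrs⟩

theorem stmt3
    (k m n : ℕ) (hk : 1 ≤ k) (hm : 1 ≤ m) (hn : 1 ≤ n)
    (x y : ℕ → EuclideanSpace ℝ (Fin k)) (hx : x m = x 0) (hy : y n = y 0)
    (ε : ℝ) (hε : 0 ≤ ε)
    (Dε : Set (ℝ × ℝ)) (hDε : Dε = Dfree m n x y ε)
    (γt γb : Set (ℝ × ℝ)) (ut rt ub rb : ℝ)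
    (hγt : IsMonPath Dε γt) (hut : (ut, (n:ℝ)) ∈ γt) (hrt : (rt, (0:ℝ)) ∈ γt)
    (hγb : IsMonPath Dε γb) (hub : (ub, (0:ℝ)) ∈ γb) (hrb : (rb, (n:ℝ)) ∈ γb)
    (h1 : ut ≤ rb) (h2 : ub ≤ rt) :
    (γt ∩ γb).Nonempty := by
  -- bounds on the second coordinate of points of Dε
  have hbound : ∀ p ∈ Dε, 0 ≤ p.2 ∧ p.2 ≤ (n : ℝ) := by
    rw [hDε]
    rintro p ⟨⟨_, h2⟩, _⟩
    exact ⟨h2.1, h2.2⟩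
  have hnpos : (0 : ℝ) < n := by exact_mod_cast hn
  -- basic order facts
  have hrtut : rt ≤ ut := by
    have := hγt.2.2 (ut, (n : ℝ)) hut (rt, (0 : ℝ)) hrt
    simp only at this
    nlinarith
  have hubrb : ub ≤ rb := by
    have := hγb.2.2 (ub, (0 : ℝ)) hub (rb, (n : ℝ)) hrb
    simp only at this
    nlinarith
  -- parametrization of γt by coordinate sum on [rt, ut+n]
  have Ht : ∀ s ∈ Icc rt (ut + (n : ℝ)), ∃ r, r ∈ γt ∧ r.1 + r.2 = s := by
    have := monpath_exists_sum hγt hrt hut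
    simpa using this
  have Hb : ∀ s ∈ Icc ub (rb + (n : ℝ)), ∃ r, r ∈ γb ∧ r.1 + r.2 = s := by
    have := monpath_exists_sum hγb hub hrb
    simpa using this
  choose! Pt hPt1 hPt2 using Ht
  choose! Pb hPb1 hPb2 using Hb
  set a := rt with ha
  set b := ut + (n : ℝ) with hb
  have hab : a ≤ b := by simp only [ha, hb]; linarith
  have hsub : Icc a b ⊆ Icc ub (rb + (n : ℝ)) := by
    apply Icc_subset_Icc <;> simp only [ha, hb] <;> linarith
  have hself : Icc a b ⊆ Icc rt (ut + (n : ℝ)) := by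
    apply Icc_subset_Icc <;> simp only [ha, hb] <;> linarith
  -- Lipschitz continuity of first coordinates of the parametrizations
  have lip : ∀ (γ : Set (ℝ × ℝ)) (hγ : IsMonPath Dε γ) (P : ℝ → ℝ × ℝ)
      (hP1 : ∀ s ∈ Icc a b, P s ∈ γ) (hP2 : ∀ s ∈ Icc a b, (P s).1 + (P s).2 = s),
      ContinuousOn (fun s => (P s).1) (Icc a b) := by
    intro γ hγ P hP1 hP2
    have : LipschitzOnWith 1 (fun s => (P s).1) (Icc a b) := by
      apply LipschitzOnWith.of_dist_le_mul
      intro s hs t ht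
      rcases le_total s t with hst | hst
      · have hle := monpath_coord_le hγ (hP1 s hs) (hP1 t ht)
          (by rw [hP2 s hs, hP2 t ht]; exact hst)
        have h2 : (P s).2 ≤ (P t).2 := hle.2
        have hsum1 := hP2 s hs
        have hsum2 := hP2 t ht
        rw [Real.dist_eq, Real.dist_eq, abs_of_nonpos (by linarith [hle.1]),
          abs_of_nonpos (by linarith)]
        push_cast
        linarith
      · have hle := monpath_coord_le hγ (hP1 t ht) (hP1 s hs)
          (by rw [hP2 s hs, hP2 t ht]; exact hst)
        have hsum1 := hP2 s hs
        have hsum2 := hP2 t ht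
        rw [Real.dist_eq, Real.dist_eq, abs_of_nonneg (by linarith [hle.1]),
          abs_of_nonneg (by linarith)]
        push_cast
        linarith
    exact this.continuousOn
  have contt := lip γt hγt Pt (fun s hs => hPt1 s (hself hs)) (fun s hs => hPt2 s (hself hs))
  have contb := lip γb hγb Pb (fun s hs => hPb1 s (hsub hs)) (fun s hs => hPb2 s (hsub hs))
  -- the comparison function
  set φ : ℝ → ℝ := fun s => (Pt s).1 - (Pb s).1 with hφ
  have contφ : ContinuousOn φ (Icc a b) := contt.sub contb
  -- endpoint values
  have haI : a ∈ Icc a b := left_mem_Icc.2 hab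
  have hbI : b ∈ Icc a b := right_mem_Icc.2 hab
  have hPta : Pt a = (rt, (0 : ℝ)) := by
    apply monpath_eq_of_sum_eq hγt (hPt1 a (hself haI)) hrt
    rw [hPt2 a (hself haI)]; simp [ha]
  have hPtb : Pt b = (ut, (n : ℝ)) := by
    apply monpath_eq_of_sum_eq hγt (hPt1 b (hself hbI)) hut
    rw [hPt2 b (hself hbI)]
  have hφa : 0 ≤ φ a := by
    have hmem := hbound _ (hγb.1 (hPb1 a (hsub haI)))
    have hsum := hPb2 a (hsub haI)
    simp only [hφ, hPta]
    simp only [ha] at hsum ⊢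
    linarith [hmem.1]
  have hφb : φ b ≤ 0 := by
    have hmem := hbound _ (hγb.1 (hPb1 b (hsub hbI)))
    have hsum := hPb2 b (hsub hbI)
    simp only [hφ, hPtb]
    simp only [hb] at hsum ⊢
    linarith [hmem.2]
  -- intermediate value theorem
  have h0 : (0 : ℝ) ∈ Icc (φ b) (φ a) := ⟨hφb, hφa⟩
  obtain ⟨s, hsI, hs0⟩ := intermediate_value_Icc' hab contφ h0
  have heq : Pt s = Pb s := by
    apply monpath_eq_of_sum_eq hγb (by
      have h1 : (Pt s).1 = (Pb s).1 := by
        have : (Pt s).1 - (Pb s).1 = 0 := hs0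
        linarith
      have h2 : (Pt s).2 = (Pb s).2 := by
        have e1 := hPt2 s (hself hsI)
        have e2 := hPb2 s (hsub hsI)
        linarith
      rw [show Pt s = Pb s from Prod.ext h1 h2]
      exact hPb1 s (hsub hsI)) (hPb1 s (hsub hsI)) (by
        rw [hPt2 s (hself hsI), hPb2 s (hsub hsI)])
  refine ⟨Pt s, hPt1 s (hself hsI), ?_⟩
  rw [heq]
  exact hPb1 s (hsub hsI)
end
end

section
/- If (u_1, v_1), (u_2, v_2) ∈ g_↓ and (u_1, v_1) ≼ (u_2, v_2), then r_↓(u_1, v_1) ≤ r_↓(u_2, v_2). -/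
open Set

noncomputable section

section Stmt6Aux

open Function

/-- The "anti-diagonal level" function. -/
private def phi2 (w : ℝ × ℝ) : ℝ := w.1 + w.2

private lemma phi2_cont : Continuous phi2 := continuous_fst.add continuous_snd

private lemma chain_of_mon {γ : Set (ℝ × ℝ)}
    (h : ∀ p ∈ γ, ∀ q ∈ γ, (p.1 - q.1) * (p.2 - q.2) ≥ 0)
    {w w' : ℝ × ℝ} (hw : w ∈ γ) (hw' : w' ∈ γ) : w ≤ w' ∨ w' ≤ w := by
  have H := h w hw w' hw'
  rcases le_total w.1 w'.1 with h1 | h1 <;> rcases le_total w.2 w'.2 with h2 | h2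
  · exact Or.inl ⟨h1, h2⟩
  · have h0 : (w.1 - w'.1) * (w.2 - w'.2) = 0 := by nlinarith
    rcases mul_eq_zero.mp h0 with h3 | h3
    · exact Or.inr ⟨le_of_eq (by linarith [sub_eq_zero.mp h3]), h2⟩
    · exact Or.inl ⟨h1, le_of_eq (sub_eq_zero.mp h3)⟩
  · have h0 : (w.1 - w'.1) * (w.2 - w'.2) = 0 := by nlinarith
    rcases mul_eq_zero.mp h0 with h3 | h3
    · exact Or.inl ⟨le_of_eq (sub_eq_zero.mp h3), h2⟩
    · exact Or.inr ⟨h1, le_of_eq (by linarith [sub_eq_zero.mp h3])⟩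
  · exact Or.inr ⟨h1, h2⟩

private lemma mono_of_chain {γ : Set (ℝ × ℝ)}
    (hch : ∀ w ∈ γ, ∀ w' ∈ γ, w ≤ w' ∨ w' ≤ w)
    {w w' : ℝ × ℝ} (hw : w ∈ γ) (hw' : w' ∈ γ) (hs : phi2 w ≤ phi2 w') :
    w ≤ w' := by
  rcases hch w hw w' hw' with h | h
  · exact h
  · have h1 : w'.1 ≤ w.1 := h.1
    have h2 : w'.2 ≤ w.2 := h.2
    simp only [phi2] at hs
    exact ⟨by linarith, by linarith⟩

private lemma eq_of_phi_eq {γ : Set (ℝ × ℝ)}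
    (hch : ∀ w ∈ γ, ∀ w' ∈ γ, w ≤ w' ∨ w' ≤ w)
    {w w' : ℝ × ℝ} (hw : w ∈ γ) (hw' : w' ∈ γ) (hs : phi2 w = phi2 w') :
    w = w' :=
  le_antisymm (mono_of_chain hch hw hw' (le_of_eq hs))
    (mono_of_chain hch hw' hw (le_of_eq hs.symm))

private lemma psi_spec {γ : Set (ℝ × ℝ)} {s : ℝ} (hs : s ∈ phi2 '' γ) :
    invFunOn phi2 γ s ∈ γ ∧ phi2 (invFunOn phi2 γ s) = s := by
  obtain ⟨w, hw, hws⟩ := hs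
  exact ⟨Function.invFunOn_mem ⟨w, hw, hws⟩, Function.invFunOn_eq ⟨w, hw, hws⟩⟩

private lemma psi_apply {γ : Set (ℝ × ℝ)}
    (hch : ∀ w ∈ γ, ∀ w' ∈ γ, w ≤ w' ∨ w' ≤ w)
    {w : ℝ × ℝ} (hw : w ∈ γ) : invFunOn phi2 γ (phi2 w) = w := by
  have h := psi_spec (⟨w, hw, rfl⟩ : phi2 w ∈ phi2 '' γ)
  exact eq_of_phi_eq hch h.1 hw h.2

private lemma psi_lip {γ : Set (ℝ × ℝ)}
    (hch : ∀ w ∈ γ, ∀ w' ∈ γ, w ≤ w' ∨ w' ≤ w) :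
    LipschitzOnWith 1 (invFunOn phi2 γ) (phi2 '' γ) := by
  rw [lipschitzOnWith_iff_dist_le_mul]
  intro s hs t ht
  obtain ⟨hsm, hse⟩ := psi_spec hs
  obtain ⟨htm, hte⟩ := psi_spec ht
  rw [NNReal.coe_one, one_mul, Prod.dist_eq, Real.dist_eq, Real.dist_eq, Real.dist_eq]
  simp only [phi2] at hse hte
  rcases le_total s t with h | h
  · have hle := mono_of_chain hch hsm htm (by simp only [phi2]; rw [hse, hte]; exact h)
    have h1 := hle.1
    have h2 := hle.2
    rw [abs_of_nonpos (by linarith), abs_of_nonpos (by linarith),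
      abs_of_nonpos (by linarith)]
    exact max_le (by linarith) (by linarith)
  · have hle := mono_of_chain hch htm hsm (by simp only [phi2]; rw [hse, hte]; exact h)
    have h1 := hle.1
    have h2 := hle.2
    rw [abs_of_nonneg (by linarith), abs_of_nonneg (by linarith),
      abs_of_nonneg (by linarith)]
    exact max_le (by linarith) (by linarith)

private lemma reach_le_fst {E : Set (ℝ × ℝ)} {p : ℝ × ℝ} {u : ℝ} (hp2 : 0 < p.2)
    (h : Reach E p (u, 0)) : u ≤ p.1 := by
  obtain ⟨γ, ⟨_, _, hm⟩, hpγ, huγ⟩ := h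
  rcases chain_of_mon hm huγ hpγ with h | h
  · exact h.1
  · exact absurd h.2 (not_le.mpr hp2)

private lemma reach_cross {E : Set (ℝ × ℝ)} {p q : ℝ × ℝ} {u b : ℝ}
    (hp2 : 0 < p.2) (hq2 : 0 ≤ q.2) (hpq1 : p.1 ≤ q.1) (hpq2 : q.2 ≤ p.2)
    (hbu : b ≤ u)
    (hru : Reach E p (u, 0)) (hrb : Reach E q (b, 0)) :
    Reach E q (u, 0) := by
  classical
  obtain ⟨γ, ⟨hγD, hγc, hγm⟩, hpγ, huγ⟩ := hru
  obtain ⟨δ, ⟨hδD, hδc, hδm⟩, hqδ, hbδ⟩ := hrb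
  have hγch : ∀ w ∈ γ, ∀ w' ∈ γ, w ≤ w' ∨ w' ≤ w :=
    fun w hw w' hw' => chain_of_mon hγm hw hw'
  have hδch : ∀ w ∈ δ, ∀ w' ∈ δ, w ≤ w' ∨ w' ≤ w :=
    fun w hw w' hw' => chain_of_mon hδm hw hw'
  set ψγ := invFunOn phi2 γ with hψγdef
  set ψδ := invFunOn phi2 δ with hψδdef
  have hphiu : phi2 ((u, 0) : ℝ × ℝ) = u := by simp [phi2]
  have hphib : phi2 ((b, 0) : ℝ × ℝ) = b := by simp [phi2]
  have huSγ : u ∈ phi2 '' γ := ⟨(u, 0), huγ, hphiu⟩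
  have hpSγ : phi2 p ∈ phi2 '' γ := ⟨p, hpγ, rfl⟩
  have hbSδ : b ∈ phi2 '' δ := ⟨(b, 0), hbδ, hphib⟩
  have hqSδ : phi2 q ∈ phi2 '' δ := ⟨q, hqδ, rfl⟩
  have hup1 : u ≤ p.1 := reach_le_fst hp2 ⟨γ, ⟨hγD, hγc, hγm⟩, hpγ, huγ⟩
  have hphip : phi2 p = p.1 + p.2 := rfl
  have hphiq : phi2 q = q.1 + q.2 := rfl
  set sstar := min (phi2 p) (phi2 q) with hsstardef
  have hus : u ≤ sstar := le_min (by rw [hphip]; linarith) (by rw [hphiq]; linarith)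
  have hγSpre : IsPreconnected (phi2 '' γ) :=
    hγc.isPreconnected.image _ phi2_cont.continuousOn
  have hδSpre : IsPreconnected (phi2 '' δ) :=
    hδc.isPreconnected.image _ phi2_cont.continuousOn
  have hIγ : Icc u sstar ⊆ phi2 '' γ := by
    intro s hs
    exact hγSpre.ordConnected.out huSγ hpSγ ⟨hs.1, le_trans hs.2 (min_le_left _ _)⟩
  have hIδ : Icc u sstar ⊆ phi2 '' δ := by
    intro s hs
    exact hδSpre.ordConnected.out hbSδ hqSδ ⟨le_trans hbu hs.1, le_trans hs.2 (min_le_right _ _)⟩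
  -- the function whose zero gives the crossing point
  have hcont : ContinuousOn (fun s => (ψγ s).1 - (ψδ s).1) (Icc u sstar) := by
    have c1 : ContinuousOn ψγ (Icc u sstar) := ((psi_lip hγch).continuousOn).mono hIγ
    have c2 : ContinuousOn ψδ (Icc u sstar) := ((psi_lip hδch).continuousOn).mono hIδ
    exact (continuous_fst.comp_continuousOn c1).sub (continuous_fst.comp_continuousOn c2)
  have husI : u ∈ Icc u sstar := ⟨le_refl u, hus⟩
  have hssI : sstar ∈ Icc u sstar := ⟨hus, le_refl sstar⟩
  -- value at u is nonnegative
  have hvalu : 0 ≤ (ψγ u).1 - (ψδ u).1 := by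
    have e1 : ψγ u = (u, 0) := by
      have := psi_apply hγch huγ; rwa [hphiu] at this
    obtain ⟨hzδ, hzφ⟩ := psi_spec (hIδ husI)
    have e2 : ψδ b = (b, 0) := by
      have := psi_apply hδch hbδ; rwa [hphib] at this
    have hle : ψδ b ≤ ψδ u :=
      mono_of_chain hδch (psi_spec hbSδ).1 hzδ (by rw [(psi_spec hbSδ).2, hzφ]; exact hbu)
    rw [e2] at hle
    have h02 : (0:ℝ) ≤ (ψδ u).2 := hle.2
    simp only [phi2] at hzφ
    rw [e1]
    simp only
    linarith
  -- value at sstar is nonpositive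
  have hvals : (ψγ sstar).1 - (ψδ sstar).1 ≤ 0 := by
    obtain ⟨hwγ, hwγφ⟩ := psi_spec (hIγ hssI)
    obtain ⟨hwδ, hwδφ⟩ := psi_spec (hIδ hssI)
    have h1 : ψγ sstar ≤ p :=
      mono_of_chain hγch hwγ hpγ (by rw [hwγφ]; exact min_le_left _ _)
    have h2 : ψδ sstar ≤ q :=
      mono_of_chain hδch hwδ hqδ (by rw [hwδφ]; exact min_le_right _ _)
    have h3 : p.1 + q.2 ≤ sstar :=
      le_min (by rw [hphip]; linarith) (by rw [hphiq]; linarith)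
    have h4 := h1.1
    have h5 := h2.2
    simp only [phi2] at hwδφ
    linarith
  obtain ⟨s₀, hs₀I, hs₀⟩ := intermediate_value_Icc' hus hcont ⟨hvals, hvalu⟩
  obtain ⟨hzγ, hzγφ⟩ := psi_spec (hIγ hs₀I)
  obtain ⟨hzδ, hzδφ⟩ := psi_spec (hIδ hs₀I)
  set z := ψγ s₀ with hzdef
  have hzz : z = ψδ s₀ := by
    have h1 : z.1 = (ψδ s₀).1 := by
      have := hs₀
      simp only at this
      linarith [this]
    have h2 : z.2 = (ψδ s₀).2 := by
      simp only [phi2] at hzγφ hzδφ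
      linarith
    exact Prod.ext h1 h2
  have hzδ' : z ∈ δ := hzz ▸ hzδ
  have hzφ : phi2 z = s₀ := hzγφ
  -- the combined monotone path
  refine ⟨(γ ∩ {w | w ≤ z}) ∪ (δ ∩ {w | z ≤ w}), ⟨?_, ?_, ?_⟩, ?_, ?_⟩
  · rintro w (⟨hw, -⟩ | ⟨hw, -⟩)
    · exact hγD hw
    · exact hδD hw
  · -- connectedness
    have hA : γ ∩ {w | w ≤ z} = ψγ '' (phi2 '' γ ∩ Iic s₀) := by
      ext w
      constructor
      · rintro ⟨hwγ, hwz⟩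
        refine ⟨phi2 w, ⟨⟨w, hwγ, rfl⟩, ?_⟩, psi_apply hγch hwγ⟩
        have : phi2 w ≤ phi2 z := add_le_add hwz.1 hwz.2
        rw [hzφ] at this; exact this
      · rintro ⟨s, ⟨hsS, hsle⟩, rfl⟩
        obtain ⟨hm1, hm2⟩ := psi_spec hsS
        exact ⟨hm1, mono_of_chain hγch hm1 hzγ (by rw [hm2, hzφ]; exact hsle)⟩
    have hB : δ ∩ {w | z ≤ w} = ψδ '' (phi2 '' δ ∩ Ici s₀) := by
      ext w
      constructor
      · rintro ⟨hwδ, hwz⟩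
        refine ⟨phi2 w, ⟨⟨w, hwδ, rfl⟩, ?_⟩, psi_apply hδch hwδ⟩
        have : phi2 z ≤ phi2 w := add_le_add hwz.1 hwz.2
        rw [hzφ] at this; exact this
      · rintro ⟨s, ⟨hsS, hsle⟩, rfl⟩
        obtain ⟨hm1, hm2⟩ := psi_spec hsS
        refine ⟨hm1, ?_⟩
        have : phi2 z ≤ phi2 (ψδ s) := by rw [hm2, hzφ]; exact hsle
        exact mono_of_chain hδch hzδ' hm1 this
    have hApre : IsPreconnected (γ ∩ {w | w ≤ z}) := by
      rw [hA]
      exact ((hγSpre.ordConnected.inter ordConnected_Iic).isPreconnected).image _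
        (((psi_lip hγch).continuousOn).mono (inter_subset_left))
    have hBpre : IsPreconnected (δ ∩ {w | z ≤ w}) := by
      rw [hB]
      exact ((hδSpre.ordConnected.inter ordConnected_Ici).isPreconnected).image _
        (((psi_lip hδch).continuousOn).mono (inter_subset_left))
    have hzA : z ∈ γ ∩ {w | w ≤ z} := ⟨hzγ, le_refl z⟩
    have hzB : z ∈ δ ∩ {w | z ≤ w} := ⟨hzδ', le_refl z⟩
    exact ⟨⟨z, Or.inl hzA⟩, IsPreconnected.union z hzA hzB hApre hBpre⟩
  · -- monotonicity
    rintro a (⟨haγ, haz⟩ | ⟨haδ, haz⟩) c (⟨hcγ, hcz⟩ | ⟨hcδ, hcz⟩)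
    · exact hγm a haγ c hcγ
    · have h1 : a.1 ≤ c.1 := le_trans haz.1 hcz.1
      have h2 : a.2 ≤ c.2 := le_trans haz.2 hcz.2
      nlinarith
    · have h1 : c.1 ≤ a.1 := le_trans hcz.1 haz.1
      have h2 : c.2 ≤ a.2 := le_trans hcz.2 haz.2
      nlinarith
    · exact hδm a haδ c hcδ
  · -- q is in the path
    refine Or.inr ⟨hqδ, ?_⟩
    exact mono_of_chain hδch hzδ' hqδ (by rw [hzφ]; exact le_trans hs₀I.2 (min_le_right _ _))
  · -- (u,0) is in the path
    refine Or.inl ⟨huγ, ?_⟩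
    exact mono_of_chain hγch huγ hzγ (by rw [hzφ, hphiu]; exact hs₀I.1)

end Stmt6Aux

theorem stmt6
    (k m n : ℕ) (hk : 1 ≤ k) (hm : 1 ≤ m) (hn : 1 ≤ n)
    (x y : ℕ → EuclideanSpace ℝ (Fin k)) (hx : x m = x 0) (hy : y n = y 0)
    (ε : ℝ) (hε : 0 ≤ ε)
    (Dε : Set (ℝ × ℝ)) (hDε : Dε = Dfree m n x y ε)
    (p q : ℝ × ℝ) (hp : p ∈ gDown m Dε) (hq : q ∈ gDown m Dε)
    (hpq : prec p q) :
    rDown m Dε p ≤ rDown m Dε q := by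
  classical
  have hsub : Dε ⊆ Dfull m n := by
    rw [hDε]; exact fun w hw => hw.1
  obtain ⟨hpD, bp', hbp'B, hreachp⟩ := hp
  obtain ⟨hqD, bq', hbq'B, hreachq⟩ := hq
  have hbp'2 : bp'.2 = 0 := hbp'B.2
  have hbq'2 : bq'.2 = 0 := hbq'B.2
  have hbp'eq : bp' = (bp'.1, (0:ℝ)) := Prod.ext rfl hbp'2
  have hbq'eq : bq' = (bq'.1, (0:ℝ)) := Prod.ext rfl hbq'2
  rw [hbp'eq] at hreachp
  rw [hbq'eq] at hreachq
  have hp2 : (0:ℝ) ≤ p.2 := (hsub hpD).2.1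
  have hq2 : (0:ℝ) ≤ q.2 := (hsub hqD).2.1
  have hSpne : ({u : ℝ | u ∈ Icc (0:ℝ) (2*(m:ℝ)) ∧ Reach Dε p (u, (0:ℝ))}).Nonempty :=
    ⟨bp'.1, hbp'B.1, hreachp⟩
  have hSqbdd : BddAbove {u : ℝ | u ∈ Icc (0:ℝ) (2*(m:ℝ)) ∧ Reach Dε q (u, (0:ℝ))} :=
    ⟨2*(m:ℝ), fun v hv => hv.1.2⟩
  by_cases hp0 : p.2 = 0
  · by_cases hq0 : q.2 = 0
    · simp only [rDown, if_pos hp0, if_pos hq0]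
      exact hpq.1
    · exact absurd (le_antisymm (hp0 ▸ hpq.2) hq2) hq0
  · have hp2pos : 0 < p.2 := lt_of_le_of_ne hp2 (Ne.symm hp0)
    by_cases hq0 : q.2 = 0
    · simp only [rDown, if_neg hp0, if_pos hq0]
      refine csSup_le hSpne ?_
      rintro u ⟨hu1, hu2⟩
      exact le_trans (reach_le_fst hp2pos hu2) hpq.1
    · have hq2pos : 0 < q.2 := lt_of_le_of_ne hq2 (Ne.symm hq0)
      simp only [rDown, if_neg hp0, if_neg hq0]
      refine csSup_le hSpne ?_
      rintro u ⟨hu1, hu2⟩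
      rcases le_total u bp'.1 with hub | hub
      case _ =>
        -- even simpler: compare with bq'; do full case analysis on u ≤ bq'.1
        rcases le_total u bq'.1 with h | h
        · exact le_trans h (le_csSup hSqbdd ⟨hbq'B.1, hreachq⟩)
        · have : Reach Dε q (u, 0) :=
            reach_cross hp2pos hq2 hpq.1 hpq.2 h hu2 hreachq
          exact le_csSup hSqbdd ⟨hu1, this⟩
      case _ =>
        rcases le_total u bq'.1 with h | h
        · exact le_trans h (le_csSup hSqbdd ⟨hbq'B.1, hreachq⟩)
        · have : Reach Dε q (u, 0) :=
            reach_cross hp2pos hq2 hpq.1 hpq.2 h hu2 hreachq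
          exact le_csSup hSqbdd ⟨hu1, this⟩
end
end
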